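/- arXiv:2209.08029 — 4 statements merged into one kernel-verified Lean document; each statement's English description precedes it below -/
import Mathlib

section
/- Let G be a finite simple graph with Cartier–Foata monoid M, and let w be a nonempty word in M. Then the initial alphabet IA(w) = {v : ∃u, w = u·v} is a nonempty independent subset of G. -/
open Classical in
noncomputable def Iav {W : Type*} [Fintype W] (G : SimpleGraph W) (T : Set W) :
    MvPolynomial W ℂ :=
  ∑ S ∈ Finset.univ.filter
      (fun S : Finset W => (∀ x ∈ S, ∀ y ∈ S, ¬ G.Adj x y) ∧ ∀ x ∈ S, x ∉ T),
    (-1 : MvPolynomial W ℂ) ^ S.card * ∏ v ∈ S, MvPolynomial.X v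

def CFRel {V : Type*} (G : SimpleGraph V) : FreeMonoid V → FreeMonoid V → Prop :=
  fun a b => ∃ u v : V, u ≠ v ∧ ¬ G.Adj u v ∧
    a = FreeMonoid.of u * FreeMonoid.of v ∧ b = FreeMonoid.of v * FreeMonoid.of u

def CFCon {V : Type*} (G : SimpleGraph V) : Con (FreeMonoid V) := conGen (CFRel G)

def CF {V : Type*} (G : SimpleGraph V) := (CFCon G).Quotient

instance {V : Type*} (G : SimpleGraph V) : Monoid (CF G) := Con.monoid _

def CFmk {V : Type*} (G : SimpleGraph V) : FreeMonoid V →* CF G := (CFCon G).mk'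

def IA {V : Type*} {G : SimpleGraph V} (w : CF G) : Set V :=
  {v | ∃ u : CF G, w = u * CFmk G (FreeMonoid.of v)}

noncomputable def CFab {V : Type*} (G : SimpleGraph V) :
    CF G →* Multiplicative (Multiset V) :=
  Con.lift _ ((FreeMonoid.lift fun v => Multiplicative.ofAdd ({v} : Multiset V)))
    (by
      refine Con.conGen_le.mpr ?_
      rintro x y ⟨u, v, -, -, rfl, rfl⟩
      refine (Con.ker_rel _).mpr ?_
      simp [mul_comm])

noncomputable def wlen {V : Type*} {G : SimpleGraph V} (w : CF G) : ℕ :=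
  Multiset.card (Multiplicative.toAdd (CFab G w))

noncomputable def occ {V : Type*} [DecidableEq V] {G : SimpleGraph V} (v : V) (w : CF G) : ℕ :=
  Multiset.count v (Multiplicative.toAdd (CFab G w))

/-- The product `Π_{y∈K} y` of the letters of a finite set `K`, multiplied in
increasing order, as an element of the Cartier–Foata monoid. -/
def prodOf {V : Type*} [LinearOrder V] (G : SimpleGraph V) (K : Finset V) : CF G :=
  CFmk G (FreeMonoid.ofList (K.sort (· ≤ ·)))

/-- `S` is an independent set of `G`. -/
def IsIndepSet {W : Type*} (G : SimpleGraph W) (S : Set W) : Prop :=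
  ∀ u ∈ S, ∀ v ∈ S, ¬ G.Adj u v


open Classical in
/-- Projection of the Cartier–Foata monoid onto the free monoid on letters `a`, `b`,
well-defined when `a` and `b` are adjacent. -/
noncomputable def CFproj {V : Type*} {G : SimpleGraph V} {a b : V} (hab : G.Adj a b) :
    CF G →* FreeMonoid V :=
  Con.lift _ (FreeMonoid.lift fun v => if v = a ∨ v = b then FreeMonoid.of v else 1)
    (by
      refine Con.conGen_le.mpr ?_
      rintro x y ⟨u, v, huv, hnadj, rfl, rfl⟩
      refine (Con.ker_rel _).mpr ?_
      simp only [map_mul, FreeMonoid.lift_eval_of]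
      by_cases hu : u = a ∨ u = b
      · by_cases hv : v = a ∨ v = b
        · exfalso
          rcases hu with rfl | rfl <;> rcases hv with rfl | rfl
          · exact huv rfl
          · exact hnadj hab
          · exact hnadj hab.symm
          · exact huv rfl
        · simp [hu, hv]
      · simp [hu])

theorem CFproj_ends {V : Type*} {G : SimpleGraph V} {a b : V} (hab : G.Adj a b)
    (u : CF G) (c : V) (hc : c = a ∨ c = b) :
    (FreeMonoid.toList (CFproj hab (u * CFmk G (FreeMonoid.of c)))).getLast? = some c := by
  obtain ⟨l, rfl⟩ : ∃ l, CFmk G l = u := Con.mk'_surjective u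
  have : CFproj hab (CFmk G (FreeMonoid.of c)) = FreeMonoid.of c := by
    refine ((CFCon G).lift_mk' _ (FreeMonoid.of c)).trans ?_
    rw [FreeMonoid.lift_eval_of, if_pos hc]
  rw [map_mul, this]
  show ((FreeMonoid.toList _) ++ [c]).getLast? = some c
  simp

/-- The initial alphabet of a nonempty word in the Cartier–Foata monoid is a
nonempty independent subset of `G`. -/
theorem stmt_6 {V : Type*} [Fintype V] (G : SimpleGraph V) (w : CF G) (hw : w ≠ 1) :
    (IA w).Nonempty ∧ IsIndepSet G (IA w) := by
  constructor
  · obtain ⟨l, rfl⟩ := Con.mk'_surjective w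
    rcases List.eq_nil_or_concat (FreeMonoid.toList l) with h | ⟨L, c, h⟩
    · exact absurd (by simp [CFmk, show l = 1 from h, map_one]; rfl) hw
    · refine ⟨c, CFmk G (FreeMonoid.ofList L), ?_⟩
      rw [← map_mul]
      congr 1
      apply FreeMonoid.toList.injective
      simpa using h
  · rintro x ⟨u, hu⟩ y ⟨u', hu'⟩ hadj
    rcases eq_or_ne x y with rfl | hxy
    · exact G.loopless.irrefl x hadj
    have h1 := CFproj_ends hadj u x (Or.inl rfl)
    have h2 := CFproj_ends hadj u' y (Or.inr rfl)
    rw [← hu] at h1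
    rw [← hu'] at h2
    rw [h1] at h2
    exact hxy (Option.some_injective _ h2)
end

section
/- Let G be a finite simple graph with Cartier–Foata monoid M, and let K be a nonempty independent subset of V(G). The map w ↦ w / (Π_{y∈K} y) (removing one trailing occurrence of each vertex of K, which is possible since IA(w) = K and K is independent) is a bijection from 𝒫^c_K(G), the nonempty words with initial alphabet exactly K, onto 𝒫^∅_{N_G[K]}(G), the set of words (including the empty word) whose initial alphabet is contained in N_G[K]. -/
namespace CFAux

variable {V : Type*} (G : SimpleGraph V)

/-! ### An automaton characterizing membership in the initial alphabet -/

/-- Automaton step (reading letters right-to-left) for tracking whether `v` belongs to the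
initial alphabet.  State `(p, a)`: `p` means "`v` occurs in the suffix read so far, and every
letter after its last occurrence is distinct from and non-adjacent to `v`"; `a` means "every
letter of the suffix read so far is distinct from and non-adjacent to `v`". -/
lemma mk'_eq_CFmk (l : FreeMonoid V) : (CFCon G).mk' l = CFmk G l := rfl

def T (v x : V) : Function.End (Prop × Prop) := fun s =>
  ⟨(x = v ∧ (s.1 ∨ s.2)) ∨ (x ≠ v ∧ s.1), s.2 ∧ x ≠ v ∧ ¬ G.Adj x v⟩

lemma T_comm {u w : V} (v : V) (huw : u ≠ w) (hadj : ¬ G.Adj u w) :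
    T G v u * T G v w = T G v w * T G v u := by
  have hsym : ¬ G.Adj w u := fun h => hadj (G.adj_symm h)
  funext s
  show T G v u (T G v w s) = T G v w (T G v u s)
  by_cases hu : u = v <;> by_cases hw : w = v
  · exact absurd (hu.trans hw.symm) huw
  · subst hu
    refine Prod.ext (propext ?_) (propext ?_) <;> simp only [T] <;> tauto
  · subst hw
    refine Prod.ext (propext ?_) (propext ?_) <;> simp only [T] <;> tauto
  · refine Prod.ext (propext ?_) (propext ?_) <;> simp only [T] <;> tauto

/-- Run the automaton on a word. -/
def runF (v : V) : FreeMonoid V →* Function.End (Prop × Prop) :=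
  FreeMonoid.lift (T G v)

lemma runF_le (v : V) : CFCon G ≤ Con.ker (runF G v) := by
  refine Con.conGen_le.mpr ?_
  rintro x y ⟨u, w, huw, hadj, rfl, rfl⟩
  refine (Con.ker_rel _).mpr ?_
  simp only [map_mul, runF, FreeMonoid.lift_eval_of]
  exact T_comm G v huw hadj

/-- The automaton run, as a function on the Cartier–Foata monoid. -/
def homE (v : V) : CF G →* Function.End (Prop × Prop) :=
  Con.lift _ (runF G v) (runF_le G v)

lemma homE_mk (v : V) (l : FreeMonoid V) : homE G v (CFmk G l) = runF G v l :=
  Con.lift_mk' _ _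

lemma end_mul_apply (f g : Function.End (Prop × Prop)) (s : Prop × Prop) :
    (f * g) s = f (g s) := rfl

lemma runF_cons (v x : V) (l : List V) (s : Prop × Prop) :
    runF G v (.ofList (x :: l)) s = T G v x (runF G v (.ofList l) s) := by
  rw [FreeMonoid.ofList_cons, map_mul, runF, FreeMonoid.lift_eval_of, end_mul_apply]

lemma runF_nil (v : V) (s : Prop × Prop) : runF G v (.ofList []) s = s := by
  show runF G v 1 s = s
  rw [map_one]; rfl

lemma fst_mono (v : V) (l : List V) (s : Prop × Prop) (hs : s.1) :
    (runF G v (.ofList l) s).1 := by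
  induction l with
  | nil => rwa [runF_nil]
  | cons x l ih =>
    rw [runF_cons]
    by_cases hx : x = v
    · exact Or.inl ⟨hx, Or.inl ih⟩
    · exact Or.inr ⟨hx, ih⟩

lemma dead_state (v : V) (l : List V) (s : Prop × Prop) (h1 : ¬ s.1) (h2 : ¬ s.2) :
    ¬ (runF G v (.ofList l) s).1 ∧ ¬ (runF G v (.ofList l) s).2 := by
  induction l with
  | nil => rw [runF_nil]; exact ⟨h1, h2⟩
  | cons x l ih =>
    rw [runF_cons]
    refine ⟨fun h => ?_, fun h => ih.2 h.1⟩
    rcases h with ⟨-, h⟩ | ⟨-, h⟩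
    · exact h.elim ih.1 ih.2
    · exact ih.1 h

lemma snd_all (v : V) (l : List V) (s : Prop × Prop)
    (h : (runF G v (.ofList l) s).2) : ∀ x ∈ l, x ≠ v ∧ ¬ G.Adj x v := by
  induction l with
  | nil => intro x hx; exact absurd hx List.not_mem_nil
  | cons y l ih =>
    rw [runF_cons] at h
    intro x hx
    rcases List.mem_cons.mp hx with rfl | hx
    · exact h.2
    · exact ih h.1 x hx

lemma fst_unchanged (v : V) (l : List V) (hl : ∀ x ∈ l, x ≠ v) (s : Prop × Prop) :
    (runF G v (.ofList l) s).1 ↔ s.1 := by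
  induction l with
  | nil => rw [runF_nil]
  | cons x l ih =>
    rw [runF_cons]
    have hx : x ≠ v := hl x List.mem_cons_self
    have ih' := ih fun y hy => hl y (List.mem_cons_of_mem _ hy)
    constructor
    · rintro (⟨h, -⟩ | ⟨-, h⟩)
      · exact absurd h hx
      · exact ih'.mp h
    · intro h; exact Or.inr ⟨hx, ih'.mpr h⟩

lemma snd_killed (v : V) (l : List V) (hl : ∃ x ∈ l, G.Adj x v) (s : Prop × Prop) :
    ¬ (runF G v (.ofList l) s).2 := by
  intro h
  obtain ⟨x, hx, hadj⟩ := hl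
  exact (snd_all G v l s h x hx).2 hadj

/-! ### Moving a letter commuting with a list to the far end -/

lemma cfmk_of_mul_of_swap {x y : V} (hxy : x ≠ y) (hadj : ¬ G.Adj x y) :
    CFmk G (.of x * .of y) = CFmk G (.of y * .of x) :=
  (Con.eq _).mpr (ConGen.Rel.of _ _ ⟨x, y, hxy, hadj, rfl, rfl⟩)

lemma move_to_end (v : V) (l : List V) (hl : ∀ y ∈ l, y ≠ v ∧ ¬ G.Adj y v) :
    CFmk G (.ofList (v :: l)) = CFmk G (.ofList l) * CFmk G (.of v) := by
  induction l with
  | nil =>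
    show CFmk G (.ofList [v]) = CFmk G 1 * CFmk G (.of v)
    rw [map_one, one_mul]; rfl
  | cons y l ih =>
    have hy := hl y List.mem_cons_self
    have hl' : ∀ z ∈ l, z ≠ v ∧ ¬ G.Adj z v := fun z hz => hl z (List.mem_cons_of_mem _ hz)
    have h1 : CFmk G (.ofList (v :: y :: l)) =
        CFmk G (.of v * .of y) * CFmk G (.ofList l) := by
      rw [FreeMonoid.ofList_cons, FreeMonoid.ofList_cons, map_mul, map_mul, map_mul, mul_assoc]
    have h2 : ¬ G.Adj v y := fun h => hy.2 (G.adj_symm h)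
    rw [h1, cfmk_of_mul_of_swap G (Ne.symm hy.1) h2, map_mul, mul_assoc,
      ← map_mul, ← FreeMonoid.ofList_cons, ih hl', ← mul_assoc, ← map_mul,
      ← FreeMonoid.ofList_cons]

/-! ### The characterization of `IA` -/

lemma extract_one (v : V) (l : List V)
    (h : (runF G v (.ofList l) (False, True)).1) :
    ∃ u : CF G, CFmk G (.ofList l) = u * CFmk G (.of v) := by
  induction l with
  | nil => rw [runF_nil] at h; exact absurd h not_false
  | cons x l ih =>
    rw [runF_cons] at h
    rcases h with ⟨rfl, h⟩ | ⟨-, h⟩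
    · rcases h with h | h
      · obtain ⟨u, hu⟩ := ih h
        refine ⟨CFmk G (.of x) * u, ?_⟩
        rw [FreeMonoid.ofList_cons, map_mul, hu, mul_assoc]
      · have := snd_all G x l _ h
        exact ⟨CFmk G (.ofList l), move_to_end G x l this⟩
    · obtain ⟨u, hu⟩ := ih h
      refine ⟨CFmk G (.of x) * u, ?_⟩
      rw [FreeMonoid.ofList_cons, map_mul, hu, mul_assoc]

lemma mem_IA_iff (v : V) (w : CF G) :
    v ∈ IA w ↔ (homE G v w (False, True)).1 := by
  constructor
  · rintro ⟨u, rfl⟩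
    obtain ⟨l, rfl⟩ := Con.mk'_surjective (c := CFCon G) u
    show (homE G v (CFmk G l * CFmk G (.of v)) (False, True)).1
    rw [← map_mul, homE_mk]
    have : runF G v (l * .of v) (False, True) =
        runF G v l (T G v v (False, True)) := by
      rw [map_mul, runF, FreeMonoid.lift_eval_of, end_mul_apply]
    rw [this]
    have hl : l = FreeMonoid.ofList (FreeMonoid.toList l) := rfl
    rw [hl]
    exact fst_mono G v _ _ (Or.inl ⟨rfl, Or.inr trivial⟩)
  · intro h
    obtain ⟨l, rfl⟩ := Con.mk'_surjective (c := CFCon G) w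
    rw [mk'_eq_CFmk, homE_mk] at h
    rw [mk'_eq_CFmk]
    obtain ⟨u, hu⟩ := extract_one G v (FreeMonoid.toList l) h
    exact ⟨u, hu⟩

lemma not_mem_IA_one (v : V) : v ∉ IA (1 : CF G) := by
  rw [mem_IA_iff, map_one]
  exact not_false

/-! ### Peeling lemmas -/

lemma IA_mul_of_iff (v x : V) (h1 : x ≠ v) (h2 : ¬ G.Adj x v) (u : CF G) :
    v ∈ IA (u * CFmk G (.of x)) ↔ v ∈ IA u := by
  rw [mem_IA_iff, mem_IA_iff, map_mul, end_mul_apply]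
  have : homE G v (CFmk G (.of x)) (False, True) = (False, True) := by
    rw [homE_mk]
    show T G v x (False, True) = (False, True)
    refine Prod.ext (propext ?_) (propext ?_) <;> simp only [T] <;> tauto
  rw [this]

lemma IA_mul_list_iff (v : V) (l : List V) (hl : ∀ x ∈ l, x ≠ v ∧ ¬ G.Adj x v) (u : CF G) :
    v ∈ IA (u * CFmk G (.ofList l)) ↔ v ∈ IA u := by
  induction l generalizing u with
  | nil =>
    show v ∈ IA (u * CFmk G 1) ↔ _
    rw [map_one, mul_one]
  | cons x l ih =>
    have hx := hl x List.mem_cons_self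
    rw [FreeMonoid.ofList_cons, map_mul, ← mul_assoc,
      ih (fun y hy => hl y (List.mem_cons_of_mem _ hy)),
      IA_mul_of_iff G v x hx.1 hx.2]

lemma IA_mul_self (v : V) (u : CF G) : v ∈ IA (u * CFmk G (.of v)) := ⟨u, rfl⟩

lemma not_mem_IA_adj (v : V) (l : List V) (hne : ∀ x ∈ l, x ≠ v)
    (hadj : ∃ x ∈ l, G.Adj x v) (u : CF G) :
    v ∉ IA (u * CFmk G (.ofList l)) := by
  rw [mem_IA_iff, map_mul, end_mul_apply, homE_mk]
  set t := runF G v (.ofList l) (False, True) with ht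
  have h1 : ¬ t.1 := fun h => (fst_unchanged G v l hne _).mp h
  have h2 : ¬ t.2 := snd_killed G v l hadj _
  obtain ⟨m, rfl⟩ := Con.mk'_surjective (c := CFCon G) u
  rw [mk'_eq_CFmk, homE_mk]
  have hm : m = FreeMonoid.ofList (FreeMonoid.toList m) := rfl
  rw [hm]
  exact (dead_state G v _ t h1 h2).1



/-! ### Cancellation via deletion of the last occurrence of a letter -/

/-- One commutation step on words. -/
def Step (l l' : List V) : Prop :=
  ∃ (a b : List V) (x y : V), x ≠ y ∧ ¬ G.Adj x y ∧
    l = a ++ x :: y :: b ∧ l' = a ++ y :: x :: b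

lemma Step.append_left {l l' : List V} (c : List V) (h : Step G l l') :
    Step G (c ++ l) (c ++ l') := by
  obtain ⟨a, b, x, y, h1, h2, rfl, rfl⟩ := h
  exact ⟨c ++ a, b, x, y, h1, h2, by simp, by simp⟩

lemma Step.append_right {l l' : List V} (c : List V) (h : Step G l l') :
    Step G (l ++ c) (l' ++ c) := by
  obtain ⟨a, b, x, y, h1, h2, rfl, rfl⟩ := h
  exact ⟨a, b ++ c, x, y, h1, h2, by simp, by simp⟩

lemma eqvGen_append_left {l l' : List V} (c : List V)
    (h : Relation.EqvGen (Step G) l l') : Relation.EqvGen (Step G) (c ++ l) (c ++ l') := by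
  induction h with
  | rel x y h => exact Relation.EqvGen.rel _ _ (Step.append_left G c h)
  | refl x => exact Relation.EqvGen.refl _
  | symm x y _ ih => exact ih.symm _ _
  | trans x y z _ _ ih1 ih2 => exact ih1.trans _ _ _ ih2

lemma eqvGen_append_right {l l' : List V} (c : List V)
    (h : Relation.EqvGen (Step G) l l') : Relation.EqvGen (Step G) (l ++ c) (l' ++ c) := by
  induction h with
  | rel x y h => exact Relation.EqvGen.rel _ _ (Step.append_right G c h)
  | refl x => exact Relation.EqvGen.refl _
  | symm x y _ ih => exact ih.symm _ _
  | trans x y z _ _ ih1 ih2 => exact ih1.trans _ _ _ ih2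

/-- The congruence on the free monoid generated by single commutation steps. -/
def stepCon : Con (FreeMonoid V) where
  r a b := Relation.EqvGen (Step G) (FreeMonoid.toList a) (FreeMonoid.toList b)
  iseqv := ⟨fun _ => Relation.EqvGen.refl _, fun h => h.symm _ _,
    fun h1 h2 => h1.trans _ _ _ h2⟩
  mul' := by
    intro a b c d h1 h2
    have e1 : Relation.EqvGen (Step G) (FreeMonoid.toList a ++ FreeMonoid.toList c)
        (FreeMonoid.toList b ++ FreeMonoid.toList c) := eqvGen_append_right G _ h1
    have e2 : Relation.EqvGen (Step G) (FreeMonoid.toList b ++ FreeMonoid.toList c)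
        (FreeMonoid.toList b ++ FreeMonoid.toList d) := eqvGen_append_left G _ h2
    exact e1.trans _ _ _ e2

lemma cfcon_le_stepCon : CFCon G ≤ stepCon G := by
  refine Con.conGen_le.mpr ?_
  rintro a b ⟨x, y, hxy, hadj, rfl, rfl⟩
  exact Relation.EqvGen.rel _ _ ⟨[], [], x, y, hxy, hadj, rfl, rfl⟩

/-- Delete the last occurrence of `v` from a word. -/
def delLast [DecidableEq V] (v : V) (l : List V) : List V :=
  (l.reverse.erase v).reverse

lemma cfmk_swap [DecidableEq V] {x y : V} (hxy : x ≠ y) (hadj : ¬ G.Adj x y)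
    (a b : List V) :
    CFmk G (.ofList (a ++ x :: y :: b)) = CFmk G (.ofList (a ++ y :: x :: b)) := by
  have e : ∀ p q : V, CFmk G (.ofList (a ++ p :: q :: b)) =
      CFmk G (.ofList a) * CFmk G (.of p * .of q) * CFmk G (.ofList b) := by
    intro p q
    rw [show a ++ p :: q :: b = a ++ [p, q] ++ b by simp, FreeMonoid.ofList_append,
      FreeMonoid.ofList_append, map_mul, map_mul]
    rfl
  rw [e, e, cfmk_of_mul_of_swap G hxy hadj]

lemma rev_erase₁ [DecidableEq V] (v x y : V) (a b : List V) (h : v ∈ b.reverse) :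
    delLast v (a ++ x :: y :: b) = a ++ x :: y :: delLast v b := by
  unfold delLast
  rw [show (a ++ x :: y :: b).reverse = b.reverse ++ (y :: x :: a.reverse) by simp,
    List.erase_append_left _ h]
  simp

lemma rev_erase₂ [DecidableEq V] (v x : V) (a b : List V) (h : v ∉ b.reverse) :
    delLast v (a ++ x :: v :: b) = a ++ x :: b := by
  unfold delLast
  rw [show (a ++ x :: v :: b).reverse = b.reverse ++ (v :: x :: a.reverse) by simp,
    List.erase_append_right _ h, List.erase_cons_head]
  simp

lemma rev_erase₂' [DecidableEq V] (v x : V) (a b : List V) (h : v ∉ b.reverse)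
    (hx : x ≠ v) : delLast v (a ++ v :: x :: b) = a ++ x :: b := by
  unfold delLast
  rw [show (a ++ v :: x :: b).reverse = b.reverse ++ (x :: v :: a.reverse) by simp,
    List.erase_append_right _ h, List.erase_cons_tail (by simpa using hx),
    List.erase_cons_head]
  simp

lemma rev_erase₃ [DecidableEq V] (v x y : V) (a b : List V) (h : v ∉ b.reverse)
    (hx : x ≠ v) (hy : y ≠ v) :
    delLast v (a ++ x :: y :: b) = (a.reverse.erase v).reverse ++ x :: y :: b := by
  unfold delLast
  rw [show (a ++ x :: y :: b).reverse = b.reverse ++ (y :: x :: a.reverse) by simp,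
    List.erase_append_right _ h, List.erase_cons_tail (by simpa using hy),
    List.erase_cons_tail (by simpa using hx)]
  simp

lemma delLast_step [DecidableEq V] (v : V) {l l' : List V} (h : Step G l l') :
    CFmk G (.ofList (delLast v l)) = CFmk G (.ofList (delLast v l')) := by
  obtain ⟨a, b, x, y, hxy, hadj, rfl, rfl⟩ := h
  by_cases hvb : v ∈ b.reverse
  · rw [rev_erase₁ v x y a b hvb, rev_erase₁ v y x a b hvb]
    exact cfmk_swap G hxy hadj _ _
  · by_cases hvy : y = v
    · subst hvy
      have hx : x ≠ y := hxy
      rw [rev_erase₂ y x a b hvb, rev_erase₂' y x a b hvb hx]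
    · by_cases hvx : x = v
      · subst hvx
        have hy : y ≠ x := hxy.symm
        rw [rev_erase₂' x y a b hvb hy, rev_erase₂ x y a b hvb]
      · rw [rev_erase₃ v x y a b hvb hvx hvy, rev_erase₃ v y x a b hvb hvy hvx]
        exact cfmk_swap G hxy hadj _ _

lemma delLast_eqvGen [DecidableEq V] (v : V) {l l' : List V}
    (h : Relation.EqvGen (Step G) l l') :
    CFmk G (.ofList (delLast v l)) = CFmk G (.ofList (delLast v l')) := by
  induction h with
  | rel x y h => exact delLast_step G v h
  | refl x => rfl
  | symm x y _ ih => exact ih.symm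
  | trans x y z _ _ ih1 ih2 => exact ih1.trans ih2

lemma cancel_of [DecidableEq V] (v : V) {u u' : CF G}
    (h : u * CFmk G (.of v) = u' * CFmk G (.of v)) : u = u' := by
  obtain ⟨l, rfl⟩ := Con.mk'_surjective (c := CFCon G) u
  obtain ⟨l', rfl⟩ := Con.mk'_surjective (c := CFCon G) u'
  simp only [mk'_eq_CFmk] at h ⊢
  rw [← map_mul, ← map_mul] at h
  have hcon : CFCon G (l * .of v) (l' * .of v) := (Con.eq _).mp h
  have hstep := cfcon_le_stepCon G hcon
  have := delLast_eqvGen G v hstep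
  have e : ∀ m : List V, delLast v (m ++ [v]) = m := by
    intro m
    unfold delLast
    rw [show (m ++ [v]).reverse = v :: m.reverse by simp, List.erase_cons_head]
    simp
  have ht : FreeMonoid.toList (l * FreeMonoid.of v) = FreeMonoid.toList l ++ [v] := rfl
  have ht' : FreeMonoid.toList (l' * FreeMonoid.of v) = FreeMonoid.toList l' ++ [v] := rfl
  rw [ht, ht', e, e] at this
  calc CFmk G l = CFmk G (.ofList (FreeMonoid.toList l)) := rfl
    _ = CFmk G (.ofList (FreeMonoid.toList l')) := this
    _ = CFmk G l' := rfl

lemma cancel_list [DecidableEq V] (l : List V) (a b : CF G)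
    (h : a * CFmk G (.ofList l) = b * CFmk G (.ofList l)) : a = b := by
  induction l generalizing a b with
  | nil =>
    rw [show FreeMonoid.ofList ([] : List V) = 1 from rfl, map_one, mul_one, mul_one] at h
    exact h
  | cons x l ih =>
    rw [FreeMonoid.ofList_cons, map_mul, ← mul_assoc, ← mul_assoc] at h
    exact cancel_of G x (ih _ _ h)

/-! ### Divisibility by an independent set of final letters -/

lemma extract_list (w : CF G) (l : List V)
    (hp : l.Pairwise fun a b => a ≠ b ∧ ¬ G.Adj a b)
    (hIA : ∀ y ∈ l, y ∈ IA w) :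
    ∃ u : CF G, w = u * CFmk G (.ofList l) := by
  induction l using List.reverseRecOn generalizing w with
  | nil =>
    exact ⟨w, by rw [show FreeMonoid.ofList ([] : List V) = 1 from rfl, map_one, mul_one]⟩
  | append_singleton l y ih =>
    obtain ⟨u1, hu1⟩ := hIA y (by simp)
    have hp' := (List.pairwise_append.mp hp)
    have hmem : ∀ x ∈ l, x ∈ IA u1 := by
      intro x hx
      have hxy : x ≠ y ∧ ¬ G.Adj x y := hp'.2.2 x hx y (by simp)
      have h1 : y ≠ x := hxy.1.symm
      have h2 : ¬ G.Adj y x := fun hh => hxy.2 (G.adj_symm hh)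
      have := hIA x (by simp [hx])
      rw [hu1, IA_mul_of_iff G x y h1 h2] at this
      exact this
    obtain ⟨u, hu⟩ := ih u1 hp'.1 hmem
    refine ⟨u, ?_⟩
    rw [hu1, hu, mul_assoc, ← map_mul]
    rfl

end CFAux

open CFAux in
/-- For a nonempty independent subset `K` of `V(G)`, division by `Π_{y∈K} y` is
a bijection from `𝒫^c_K(G)` onto `𝒫^∅_{N_G[K]}(G)`: there is a bijection `φ`
such that `w = φ(w) · Π_{y∈K} y` for every `w` with `IA(w) = K`. -/
theorem stmt_7 {V : Type*} [Fintype V] [LinearOrder V] (G : SimpleGraph V)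
    (K : Finset V) (hK : K.Nonempty) (hind : IsIndepSet G ↑K) :
    ∃ φ : {w : CF G // w ≠ 1 ∧ IA w = ↑K} ≃
        {w : CF G // IA w ⊆ ↑K ∪ {z | ∃ y ∈ K, G.Adj y z}},
      ∀ w : {w : CF G // w ≠ 1 ∧ IA w = ↑K}, w.1 = (φ w).1 * prodOf G K := by
  classical
  set L : List V := K.sort (· ≤ ·) with hLdef
  have hmemL : ∀ x : V, x ∈ L ↔ x ∈ K := fun x => Finset.mem_sort _
  have hLK : ∀ x ∈ L, x ∈ K := fun x hx => (hmemL x).mp hx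
  have hnd : L.Nodup := K.sort_nodup _
  have hpair : L.Pairwise fun a b => a ≠ b ∧ ¬ G.Adj a b :=
    hnd.imp_of_mem fun ha hb hne =>
      ⟨hne, hind _ (Finset.mem_coe.mpr (hLK _ ha)) _ (Finset.mem_coe.mpr (hLK _ hb))⟩
  have hprod : prodOf G K = CFmk G (.ofList L) := rfl
  -- every element of K is a possible final letter of `u * ∏ K`
  have hsub2 : ∀ u : CF G, (↑K : Set V) ⊆ IA (u * prodOf G K) := by
    intro u y hy
    obtain ⟨l1, l2, hdecomp⟩ := List.append_of_mem ((hmemL y).mpr hy)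
    have h2 : (y :: l2).Nodup := (List.nodup_append.mp (hdecomp ▸ hnd)).2.1
    have hyl2 : y ∉ l2 := (List.nodup_cons.mp h2).1
    have e : CFmk G (.ofList L) =
        CFmk G (.ofList l1) * CFmk G (.of y) * CFmk G (.ofList l2) := by
      rw [show L = l1 ++ [y] ++ l2 by simp [hdecomp], FreeMonoid.ofList_append,
        FreeMonoid.ofList_append, map_mul, map_mul]
      rfl
    rw [hprod, e, ← mul_assoc, ← mul_assoc]
    have hl2 : ∀ x ∈ l2, x ≠ y ∧ ¬ G.Adj x y := by
      intro x hx
      have hxL : x ∈ L := by rw [hdecomp]; simp [hx]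
      refine ⟨fun h => hyl2 (h ▸ hx), hind _ (Finset.mem_coe.mpr (hLK x hxL))
        _ (Finset.mem_coe.mpr hy)⟩
    exact (IA_mul_list_iff G y l2 hl2 _).mpr (IA_mul_self G y _)
  -- conversely, the only possible final letters are in K
  have hsub1 : ∀ u : CF G, IA u ⊆ ↑K ∪ {z | ∃ y ∈ K, G.Adj y z} →
      IA (u * prodOf G K) ⊆ ↑K := by
    intro u hu v hv
    rw [hprod] at hv
    by_contra hvK
    have hne : ∀ x ∈ L, x ≠ v := fun x hx h => hvK (h ▸ Finset.mem_coe.mpr (hLK x hx))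
    by_cases hadj : ∃ x ∈ L, G.Adj x v
    · exact not_mem_IA_adj G v L hne hadj u hv
    · push_neg at hadj
      have hvu : v ∈ IA u := (IA_mul_list_iff G v L (fun x hx => ⟨hne x hx, hadj x hx⟩) u).mp hv
      have := hu hvu
      rw [Set.mem_union] at this
      rcases this with h | h
      · exact hvK h
      · obtain ⟨y, hy, hAdj⟩ := h
        exact hadj y ((hmemL y).mpr hy) hAdj
  have hne1 : ∀ u : CF G, u * prodOf G K ≠ 1 := by
    intro u h
    obtain ⟨y, hy⟩ := hK
    have := hsub2 u (Finset.mem_coe.mpr hy)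
    rw [h] at this
    exact not_mem_IA_one G y this
  -- the map from the codomain back to the domain
  set ψ : {w : CF G // IA w ⊆ ↑K ∪ {z | ∃ y ∈ K, G.Adj y z}} →
      {w : CF G // w ≠ 1 ∧ IA w = ↑K} :=
    fun w' => ⟨w'.1 * prodOf G K, hne1 w'.1,
      Set.Subset.antisymm (hsub1 w'.1 w'.2) (hsub2 w'.1)⟩ with hψdef
  have hinj : Function.Injective ψ := by
    intro a b hab
    have : a.1 * prodOf G K = b.1 * prodOf G K := congrArg Subtype.val hab
    rw [hprod] at this
    exact Subtype.ext (cancel_list G L a.1 b.1 this)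
  have hsurj : Function.Surjective ψ := by
    intro w
    obtain ⟨u, hu⟩ := extract_list G w.1 L hpair
      (fun y hy => by rw [w.2.2]; exact Finset.mem_coe.mpr (hLK y hy))
    have hu' : IA u ⊆ ↑K ∪ {z | ∃ y ∈ K, G.Adj y z} := by
      intro v hv
      rw [Set.mem_union]
      by_contra hc
      push_neg at hc
      obtain ⟨h1, h2⟩ := hc
      have hnomem : ∀ x ∈ L, x ≠ v ∧ ¬ G.Adj x v := by
        intro x hx
        refine ⟨fun h => h1 (h ▸ Finset.mem_coe.mpr (hLK x hx)),
          fun hA => h2 ⟨x, hLK x hx, hA⟩⟩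
      have hvw : v ∈ IA (u * CFmk G (.ofList L)) := (IA_mul_list_iff G v L hnomem u).mpr hv
      rw [← hu, w.2.2] at hvw
      exact h1 hvw
    exact ⟨⟨u, hu'⟩, Subtype.ext hu.symm⟩
  refine ⟨(Equiv.ofBijective ψ ⟨hinj, hsurj⟩).symm, fun w => ?_⟩
  have := congrArg Subtype.val ((Equiv.ofBijective ψ ⟨hinj, hsurj⟩).apply_symm_apply w)
  exact this.symm
end

section
/- Let G be a finite simple graph with Cartier–Foata monoid M and let u ∈ V(G). Every nonempty word w ∈ M whose initial alphabet is contained in {u} admits a unique factorization w = w₁ ⋯ w_k, where k = u(w) is the number of occurrences of u in w, each w_i is a nonempty word, and the initial-alphabet multiset of each w_i is exactly {u} (i.e., IA(w_i) = {u} and u occurs exactly once in w_i's initial alphabet multiset). -/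
namespace CFaux
variable {V : Type*} {G : SimpleGraph V}

/-- single adjacent transposition of commuting letters -/
def Swap (G : SimpleGraph V) : List V → List V → Prop := fun x y =>
  ∃ (p q : List V) (a b : V), a ≠ b ∧ ¬ G.Adj a b ∧
    x = p ++ a :: b :: q ∧ y = p ++ b :: a :: q

abbrev Chain (G : SimpleGraph V) := Relation.ReflTransGen (Swap G)

lemma Swap.symm {x y : List V} (h : Swap G x y) : Swap G y x := by
  obtain ⟨p, q, a, b, hne, hadj, rfl, rfl⟩ := h
  exact ⟨p, q, b, a, hne.symm, fun h => hadj h.symm, rfl, rfl⟩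

lemma Chain.symm {x y : List V} (h : Chain G x y) : Chain G y x := by
  induction h with
  | refl => exact .refl
  | tail h₁ h₂ ih => exact (Relation.ReflTransGen.single h₂.symm).trans ih

lemma Swap.length {x y : List V} (h : Swap G x y) : x.length = y.length := by
  obtain ⟨p, q, a, b, _, _, rfl, rfl⟩ := h; simp

lemma Chain.length {x y : List V} (h : Chain G x y) : x.length = y.length := by
  induction h with
  | refl => rfl
  | tail h₁ h₂ ih => exact ih.trans h₂.length

lemma Swap.append_right {x y : List V} (t : List V) (h : Swap G x y) :
    Swap G (x ++ t) (y ++ t) := by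
  obtain ⟨p, q, a, b, hne, hadj, rfl, rfl⟩ := h
  exact ⟨p, q ++ t, a, b, hne, hadj, by simp, by simp⟩

lemma Swap.append_left {x y : List V} (t : List V) (h : Swap G x y) :
    Swap G (t ++ x) (t ++ y) := by
  obtain ⟨p, q, a, b, hne, hadj, rfl, rfl⟩ := h
  exact ⟨t ++ p, q, a, b, hne, hadj, by simp, by simp⟩

lemma Chain.append_right {x y : List V} (t : List V) (h : Chain G x y) :
    Chain G (x ++ t) (y ++ t) :=
  Relation.ReflTransGen.lift (r := Swap G) (· ++ t) (fun _ _ h => h.append_right t) _ _ h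

lemma Chain.append_left {x y : List V} (t : List V) (h : Chain G x y) :
    Chain G (t ++ x) (t ++ y) :=
  Relation.ReflTransGen.lift (r := Swap G) (t ++ ·) (fun _ _ h => h.append_left t) _ _ h

lemma Chain.append {x y z w : List V} (h : Chain G x y) (h' : Chain G z w) :
    Chain G (x ++ z) (y ++ w) :=
  (h.append_right z).trans (h'.append_left y)

/-- the congruence built from chains -/
def chainCon (G : SimpleGraph V) : Con (FreeMonoid V) where
  r x y := Chain G (FreeMonoid.toList x) (FreeMonoid.toList y)
  iseqv := ⟨fun _ => .refl, Chain.symm, Relation.ReflTransGen.trans⟩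
  mul' h h' := by simpa [FreeMonoid.toList_mul] using h.append h'

lemma swap_to_cfcon {x y : List V} (h : Swap G x y) :
    CFCon G (FreeMonoid.ofList x) (FreeMonoid.ofList y) := by
  obtain ⟨p, q, a, b, hne, hadj, rfl, rfl⟩ := h
  have hrel : CFCon G (FreeMonoid.of a * FreeMonoid.of b) (FreeMonoid.of b * FreeMonoid.of a) :=
    ConGen.Rel.of _ _ ⟨a, b, hne, hadj, rfl, rfl⟩
  have : CFCon G (FreeMonoid.ofList p * (FreeMonoid.of a * FreeMonoid.of b) * FreeMonoid.ofList q)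
      (FreeMonoid.ofList p * (FreeMonoid.of b * FreeMonoid.of a) * FreeMonoid.ofList q) :=
    (CFCon G).mul ((CFCon G).mul ((CFCon G).refl _) hrel) ((CFCon G).refl _)
  simpa [FreeMonoid.ofList_append, FreeMonoid.ofList_cons, mul_assoc] using this

lemma cfcon_iff_chain {x y : FreeMonoid V} :
    CFCon G x y ↔ Chain G (FreeMonoid.toList x) (FreeMonoid.toList y) := by
  constructor
  · intro h
    have : CFCon G ≤ chainCon G := by
      refine Con.conGen_le.mpr ?_
      rintro a b ⟨u, v, hne, hadj, rfl, rfl⟩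
      exact Relation.ReflTransGen.single ⟨[], [], u, v, hne, hadj, rfl, rfl⟩
    exact this h
  · intro h
    have aux : ∀ {l m : List V}, Chain G l m →
        CFCon G (FreeMonoid.ofList l) (FreeMonoid.ofList m) := by
      intro l m h
      induction h with
      | refl => exact (CFCon G).refl _
      | tail h₁ h₂ ih => exact (CFCon G).trans ih (swap_to_cfcon h₂)
    exact aux h

end CFaux

namespace CFaux
variable {V : Type*} {G : SimpleGraph V}

lemma snoc_inj {l m : List V} {a b : V} (h : l ++ [a] = m ++ [b]) : l = m ∧ a = b := by
  have h1 := List.append_inj' h rfl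
  exact ⟨h1.1, by simpa using h1.2⟩

/-- Key lemma: analysis of the last letter across a chain. -/
lemma keyA : ∀ L : ℕ, ∀ l m : List V, ∀ a b : V, l.length + 1 = L →
    Chain G (l ++ [a]) (m ++ [b]) →
    (a = b ∧ Chain G l m) ∨
    (a ≠ b ∧ ¬ G.Adj a b ∧ ∃ n, Chain G l (n ++ [b]) ∧ Chain G m (n ++ [a])) := by
  intro L
  induction L using Nat.strong_induction_on with
  | _ L IHL =>
  intro l m a b hL h
  suffices H : ∀ x, Chain G x (m ++ [b]) → ∀ l : List V, ∀ a : V, x = l ++ [a] →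
      l.length + 1 = L →
      (a = b ∧ Chain G l m) ∨
      (a ≠ b ∧ ¬ G.Adj a b ∧ ∃ n, Chain G l (n ++ [b]) ∧ Chain G m (n ++ [a])) by
    exact H _ h l a rfl hL
  intro x hx
  induction hx using Relation.ReflTransGen.head_induction_on with
  | refl =>
      intro l a heq _
      obtain ⟨rfl, rfl⟩ := snoc_inj heq
      exact Or.inl ⟨rfl, .refl⟩
  | head hstep hchain ih =>
      intro l a heq hL
      obtain ⟨p, q, a', b', hne, hadj, hx, hy⟩ := hstep
      subst heq
      rcases List.eq_nil_or_concat q with rfl | ⟨q', c, rfl⟩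
      · -- swap involves the last letter : l ++ [a] = p ++ [a', b']
        have hx' : l ++ [a] = (p ++ [a']) ++ [b'] := by simpa using hx
        obtain ⟨rfl, rfl⟩ := snoc_inj hx'
        -- now hne : a' ≠ a, hadj : ¬ G.Adj a' a, hy : _ = p ++ [a, a']
        have hy' : _ = (p ++ [a]) ++ [a'] := hy.trans (by simp)
        have hlen : (p ++ [a]).length + 1 = L := by simpa using hL
        rcases ih _ _ hy' hlen with ⟨h1, hc⟩ | ⟨hne2, hadj2, n₁, h1, h2⟩
        · -- a' = b, Chain (p ++ [a]) m ; output branch 2 with n := p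
          refine Or.inr ⟨fun hh => hne (h1.trans hh.symm), ?_, p, ?_, hc.symm⟩
          · intro hh
            exact hadj (G.adj_symm (by rw [h1]; exact hh))
          · rw [h1]
        · -- a' ≠ b ; recurse at shorter length
          have hlt : p.length + 1 < L := by simp at hL; omega
          rcases IHL _ hlt p n₁ a b rfl h1 with ⟨hab2, hpn⟩ | ⟨hne3, hadj3, n₂, h3, h4⟩
          · exact Or.inl ⟨hab2, (hpn.append_right [a']).trans h2.symm⟩
          · refine Or.inr ⟨hne3, hadj3, n₂ ++ [a'], ?_, ?_⟩
            · refine (h3.append_right [a']).trans ?_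
              refine Relation.ReflTransGen.single ?_
              exact ⟨n₂, [], b, a', fun hh => hne2 hh.symm, fun hh => hadj2 hh.symm,
                by simp, by simp⟩
            · refine h2.trans ?_
              refine (h4.append_right [a']).trans ?_
              refine Relation.ReflTransGen.single ?_
              exact ⟨n₂, [], a, a', fun hh => hne hh.symm, fun hh => hadj hh.symm,
                by simp, by simp⟩
      · -- swap inside l
        have hx' : l ++ [a] = (p ++ a' :: b' :: q') ++ [c] := by
          simpa [List.concat_eq_append] using hx
        obtain ⟨rfl, rfl⟩ := snoc_inj hx'
        have hy' : _ = (p ++ b' :: a' :: q') ++ [a] := hy.trans (by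
          simp [List.concat_eq_append])
        have hlen : (p ++ b' :: a' :: q').length + 1 = L := by simpa using hL
        have hswap : Swap G (p ++ a' :: b' :: q') (p ++ b' :: a' :: q') :=
          ⟨p, q', a', b', hne, hadj, rfl, rfl⟩
        rcases ih _ _ hy' hlen with ⟨h1, hc⟩ | ⟨hne2, hadj2, n₁, h1, h2⟩
        · exact Or.inl ⟨h1, (Relation.ReflTransGen.single hswap).trans hc⟩
        · exact Or.inr ⟨hne2, hadj2, n₁,
            (Relation.ReflTransGen.single hswap).trans h1, h2⟩

end CFaux

namespace CFaux
variable {V : Type*} {G : SimpleGraph V}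

lemma mk_eq_mk {x y : FreeMonoid V} :
    CFmk G x = CFmk G y ↔ Chain G (FreeMonoid.toList x) (FreeMonoid.toList y) := by
  exact Iff.trans (Con.eq _) cfcon_iff_chain

lemma mkl_eq_mkl {l m : List V} :
    CFmk G (FreeMonoid.ofList l) = CFmk G (FreeMonoid.ofList m) ↔ Chain G l m :=
  mk_eq_mk

lemma exists_rep (w : CF G) : ∃ l : List V, w = CFmk G (FreeMonoid.ofList l) := by
  obtain ⟨x, hx⟩ := Con.mk'_surjective (c := CFCon G) w
  exact ⟨FreeMonoid.toList x, hx.symm⟩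

lemma mk_append (l m : List V) :
    CFmk G (FreeMonoid.ofList (l ++ m)) =
      CFmk G (FreeMonoid.ofList l) * CFmk G (FreeMonoid.ofList m) := by
  rw [FreeMonoid.ofList_append, map_mul]

lemma cfab_mk (l : List V) :
    CFab G (CFmk G (FreeMonoid.ofList l)) = Multiplicative.ofAdd (l : Multiset V) := by
  induction l with
  | nil => rw [FreeMonoid.ofList_nil, map_one, map_one]; rfl
  | cons a t ih =>
      rw [FreeMonoid.ofList_cons, map_mul, map_mul, ih]
      have : CFab G (CFmk G (FreeMonoid.of a)) = Multiplicative.ofAdd ({a} : Multiset V) := by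
        exact Con.lift_mk' _ _
      rw [this]
      rfl

lemma wlen_mk (l : List V) : wlen (CFmk G (FreeMonoid.ofList l)) = l.length := by
  simp [wlen, cfab_mk]

lemma occ_mk [DecidableEq V] (v : V) (l : List V) :
    occ v (CFmk G (FreeMonoid.ofList l)) = l.count v := by
  simp [occ, cfab_mk]

lemma wlen_mul (x y : CF G) : wlen (x * y) = wlen x + wlen y := by
  simp [wlen, map_mul]

lemma occ_mul [DecidableEq V] (v : V) (x y : CF G) : occ v (x * y) = occ v x + occ v y := by
  simp [occ, map_mul]

lemma wlen_one : wlen (1 : CF G) = 0 := by simp [wlen, map_one]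

lemma occ_one [DecidableEq V] (v : V) : occ v (1 : CF G) = 0 := by simp [occ, map_one]

lemma eq_one_of_wlen {w : CF G} (h : wlen w = 0) : w = 1 := by
  obtain ⟨l, rfl⟩ := exists_rep w
  rw [wlen_mk] at h
  rw [List.length_eq_zero_iff] at h
  subst h
  rfl

lemma wlen_of (v : V) : wlen (CFmk G (FreeMonoid.of v)) = 1 := by
  simpa using wlen_mk (G := G) [v]

lemma occ_of [DecidableEq V] (v c : V) :
    occ v (CFmk G (FreeMonoid.of c)) = if c = v then 1 else 0 := by
  have := occ_mk (G := G) v [c]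
  simpa [List.count_singleton] using this

lemma mem_IA_iff {v : V} {w : CF G} : v ∈ IA w ↔ ∃ y, w = y * CFmk G (FreeMonoid.of v) :=
  Iff.rfl

lemma mem_IA_mk_iff {v : V} {l : List V} :
    v ∈ IA (CFmk G (FreeMonoid.ofList l)) ↔ ∃ n, Chain G l (n ++ [v]) := by
  constructor
  · rintro ⟨y, hy⟩
    obtain ⟨n, rfl⟩ := exists_rep y
    rw [← FreeMonoid.ofList_singleton, ← mk_append, mkl_eq_mkl] at hy
    exact ⟨n, hy⟩
  · rintro ⟨n, hn⟩
    refine ⟨CFmk G (FreeMonoid.ofList n), ?_⟩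
    rw [← FreeMonoid.ofList_singleton, ← mk_append, mkl_eq_mkl]
    exact hn

lemma IA_nonempty {w : CF G} (h : w ≠ 1) : ∃ v, v ∈ IA w := by
  obtain ⟨l, rfl⟩ := exists_rep w
  rcases List.eq_nil_or_concat l with rfl | ⟨l', c, rfl⟩
  · exact absurd rfl h
  · refine ⟨c, mem_IA_mk_iff.mpr ⟨l', ?_⟩⟩
    rw [List.concat_eq_append]

lemma mem_IA_right {v : V} {y : CF G} (x : CF G) (h : v ∈ IA y) : v ∈ IA (x * y) := by
  obtain ⟨s, rfl⟩ := h
  exact ⟨x * s, (mul_assoc _ _ _).symm⟩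

lemma occ_pos_of_mem_IA [DecidableEq V] {v : V} {w : CF G} (h : v ∈ IA w) :
    1 ≤ occ v w := by
  obtain ⟨y, rfl⟩ := h
  rw [occ_mul, occ_of]
  simp

lemma ne_one_of_mem_IA {v : V} {w : CF G} (h : v ∈ IA w) : w ≠ 1 := by
  obtain ⟨y, rfl⟩ := h
  intro hh
  have := congrArg wlen hh
  rw [wlen_mul, wlen_of, wlen_one] at this
  omega

lemma cancel_of {v : V} {x y : CF G}
    (h : x * CFmk G (FreeMonoid.of v) = y * CFmk G (FreeMonoid.of v)) : x = y := by
  obtain ⟨l, rfl⟩ := exists_rep x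
  obtain ⟨m, rfl⟩ := exists_rep y
  rw [← FreeMonoid.ofList_singleton, ← mk_append, ← mk_append, mkl_eq_mkl] at h
  rcases keyA (l.length + 1) l m v v rfl h with ⟨-, hc⟩ | ⟨hne, -, -⟩
  · exact mkl_eq_mkl.mpr hc
  · exact absurd rfl hne

lemma of_comm {v c : V} (hne : v ≠ c) (hadj : ¬ G.Adj v c) :
    CFmk G (FreeMonoid.of v) * CFmk G (FreeMonoid.of c) =
      CFmk G (FreeMonoid.of c) * CFmk G (FreeMonoid.of v) := by
  rw [← map_mul, ← map_mul]
  exact (Con.eq _).mpr (ConGen.Rel.of _ _ ⟨v, c, hne, hadj, rfl, rfl⟩)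

/-- If `v` is in the initial alphabet of `x * y`, it is in that of `x` or of `y`. -/
lemma IA_mul_subset {v : V} : ∀ (q : List V) (x : CF G),
    v ∈ IA (x * CFmk G (FreeMonoid.ofList q)) →
    v ∈ IA x ∨ v ∈ IA (CFmk G (FreeMonoid.ofList q)) := by
  intro q
  induction q using List.reverseRecOn with
  | nil => intro x h; left; simpa using h
  | append_singleton q' c ih =>
      intro x h
      obtain ⟨p, hp⟩ := exists_rep (x * CFmk G (FreeMonoid.ofList q'))
      obtain ⟨y, hy⟩ := h
      obtain ⟨r, rfl⟩ := exists_rep y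
      rw [mk_append, ← mul_assoc, hp, ← FreeMonoid.ofList_singleton, ← mk_append,
        ← mk_append, mkl_eq_mkl] at hy
      rcases keyA (p.length + 1) p r c v rfl hy with ⟨rfl, -⟩ | ⟨hne, hadj, n, h1, -⟩
      · right
        exact mem_IA_mk_iff.mpr ⟨q', Relation.ReflTransGen.refl⟩
      · have hx : v ∈ IA (x * CFmk G (FreeMonoid.ofList q')) := by
          rw [hp]
          exact mem_IA_mk_iff.mpr ⟨n, h1⟩
        rcases ih x hx with h | h
        · exact Or.inl h
        · right
          obtain ⟨t, ht⟩ := h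
          rw [mk_append, ht, FreeMonoid.ofList_singleton, mul_assoc,
            of_comm (fun hh => hne hh.symm) (fun hh => hadj hh.symm), ← mul_assoc]
          exact ⟨t * CFmk G (FreeMonoid.of c), rfl⟩

lemma IA_one : IA (1 : CF G) = ∅ := by
  ext v
  simp only [Set.mem_empty_iff_false, iff_false]
  intro h
  exact ne_one_of_mem_IA h rfl

end CFaux

namespace CFaux
variable {V : Type*} [DecidableEq V] {G : SimpleGraph V}

lemma IA_mul_subset' {v : V} {x y : CF G} (h : v ∈ IA (x * y)) : v ∈ IA x ∨ v ∈ IA y := by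
  obtain ⟨q, rfl⟩ := exists_rep y
  exact IA_mul_subset q x h

/-- strip all removable non-`u` letters from the right -/
lemma strip (u : V) : ∀ N : ℕ, ∀ y : CF G, wlen y ≤ N →
    ∃ y₁ t : CF G, y = y₁ * t ∧ occ u t = 0 ∧ (y₁ = 1 ∨ IA y₁ ⊆ {u}) := by
  intro N
  induction N with
  | zero =>
      intro y h
      have : y = 1 := eq_one_of_wlen (Nat.le_zero.mp h)
      exact ⟨1, 1, by simp [this], occ_one u, Or.inl rfl⟩
  | succ N ih =>
      intro y h
      by_cases hIA : IA y ⊆ {u}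
      · exact ⟨y, 1, (mul_one y).symm, occ_one u, Or.inr hIA⟩
      · obtain ⟨v, hv, hvu⟩ := Set.not_subset.mp hIA
        obtain ⟨s, rfl⟩ := hv
        have hvu' : v ≠ u := by simpa [Set.mem_singleton_iff] using hvu
        have hs : wlen s ≤ N := by
          have := wlen_mul s (CFmk G (FreeMonoid.of v))
          rw [wlen_of] at this
          omega
        obtain ⟨y₁, t', rfl, ht', hy₁⟩ := ih s hs
        refine ⟨y₁, t' * CFmk G (FreeMonoid.of v), by rw [mul_assoc], ?_, hy₁⟩
        rw [occ_mul, ht', occ_of, if_neg hvu']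

/-- existence of the decomposition -/
lemma exU (u : V) : ∀ N : ℕ, ∀ w : CF G, wlen w ≤ N → w ≠ 1 → IA w ⊆ {u} →
    ∃ ws : List (CF G), ws.length = occ u w ∧ ws.prod = w ∧
      ∀ wi ∈ ws, occ u wi = 1 ∧ IA wi = {u} := by
  intro N
  induction N with
  | zero =>
      intro w h hw _
      exact absurd (eq_one_of_wlen (Nat.le_zero.mp h)) hw
  | succ N ih =>
      intro w hN hw hIA
      have hu : u ∈ IA w := by
        obtain ⟨v, hv⟩ := IA_nonempty hw
        have := hIA hv
        rw [Set.mem_singleton_iff] at this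
        exact this ▸ hv
      obtain ⟨y, rfl⟩ := hu
      obtain ⟨y₁, t, hsplit, ht, hy₁⟩ := strip u (wlen y) y le_rfl
      let ou := CFmk G (FreeMonoid.of u)
      have hou : ou = CFmk G (FreeMonoid.of u) := rfl
      set z := t * ou with hz
      have hw_eq : y * ou = y₁ * z := by rw [hsplit, mul_assoc]
      have huz : u ∈ IA z := ⟨t, rfl⟩
      have hoccz : occ u z = 1 := by
        rw [hz, occ_mul, ht, hou, occ_of, if_pos rfl]
      have hIAz : IA z = {u} := by
        apply Set.eq_of_subset_of_subset
        · intro v hv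
          exact hIA (hw_eq ▸ mem_IA_right y₁ hv)
        · intro v hv
          rw [Set.mem_singleton_iff] at hv
          exact hv ▸ huz
      by_cases hy1 : y₁ = 1
      · -- single block
        refine ⟨[y * ou], ?_, by simp [hou], ?_⟩
        · have : occ u (y * ou) = 1 := by
            rw [hw_eq, occ_mul, hy1, occ_one, hoccz]
          rw [← hou]; simp [this]
        · intro wi hwi
          rw [List.mem_singleton] at hwi
          subst hwi
          constructor
          · rw [hw_eq, occ_mul, hy1, occ_one, hoccz]
          · rw [hw_eq, hy1, one_mul, hIAz]
      · have hIAy₁ : IA y₁ ⊆ {u} := hy₁.resolve_left hy1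
        have hlen : wlen y₁ ≤ N := by
          have h1 := wlen_mul y ou
          have h2 := wlen_mul y₁ t
          rw [hou, wlen_of] at h1
          rw [← hsplit] at h2
          omega
        obtain ⟨ws', hl', hp', hf'⟩ := ih y₁ hlen hy1 hIAy₁
        refine ⟨ws' ++ [z], ?_, ?_, ?_⟩
        · have : occ u (y * ou) = occ u y₁ + 1 := by
            rw [hw_eq, occ_mul, hoccz]
          rw [← hou]; simp [this, hl']
        · rw [List.prod_append, List.prod_singleton, hp', hw_eq]
        · intro wi hwi
          rcases List.mem_append.mp hwi with h | h
          · exact hf' wi h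
          · rw [List.mem_singleton] at h
            subst h
            exact ⟨hoccz, hIAz⟩

end CFaux

namespace CFaux2
open CFaux
variable {V : Type*} [DecidableEq V] {G : SimpleGraph V}

/-- uniqueness core: factorizations `P * t` with `IA P ⊆ {u}` and `t` free of `u` agree -/
lemma ucore (u : V) : ∀ N : ℕ, ∀ t t' P P' : CF G, wlen t ≤ N →
    IA P ⊆ {u} → IA P' ⊆ {u} → occ u t = 0 → occ u t' = 0 →
    P * t = P' * t' → P = P' ∧ t = t' := by
  intro N
  induction N with
  | zero =>
      intro t t' P P' hN hP hP' ht ht' heq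
      have h1 : t = 1 := eq_one_of_wlen (Nat.le_zero.mp hN)
      subst h1
      rw [mul_one] at heq
      by_cases h2 : t' = 1
      · subst h2; rw [mul_one] at heq; exact ⟨heq, rfl⟩
      · obtain ⟨v, hv⟩ := IA_nonempty h2
        have hvP : v ∈ IA P := heq ▸ mem_IA_right P' hv
        have : v = u := Set.mem_singleton_iff.mp (hP hvP)
        subst this
        have := occ_pos_of_mem_IA hv
        omega
  | succ N ih =>
      intro t t' P P' hN hP hP' ht ht' heq
      by_cases h1 : t = 1
      · subst h1
        rw [mul_one] at heq
        by_cases h2 : t' = 1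
        · subst h2; rw [mul_one] at heq; exact ⟨heq, rfl⟩
        · obtain ⟨v, hv⟩ := IA_nonempty h2
          have hvP : v ∈ IA P := heq ▸ mem_IA_right P' hv
          have : v = u := Set.mem_singleton_iff.mp (hP hvP)
          subst this
          have := occ_pos_of_mem_IA hv
          omega
      · by_cases h2 : t' = 1
        · subst h2
          rw [mul_one] at heq
          obtain ⟨v, hv⟩ := IA_nonempty h1
          have hvP : v ∈ IA P' := heq ▸ mem_IA_right P hv
          have : v = u := Set.mem_singleton_iff.mp (hP' hvP)
          subst this
          have := occ_pos_of_mem_IA hv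
          omega
        · obtain ⟨v, hv⟩ := IA_nonempty h1
          have hvu : v ≠ u := by
            intro hh
            subst hh
            have := occ_pos_of_mem_IA hv
            omega
          obtain ⟨s, rfl⟩ := hv
          have hv' : v ∈ IA (P' * t') := by
            rw [← heq]
            exact mem_IA_right P ⟨s, rfl⟩
          rcases IA_mul_subset' hv' with h | h
          · exact absurd (Set.mem_singleton_iff.mp (hP' h)) hvu
          · obtain ⟨s', rfl⟩ := h
            rw [← mul_assoc, ← mul_assoc] at heq
            have heq' := cancel_of heq
            have hsN : wlen s ≤ N := by
              have := wlen_mul s (CFmk G (FreeMonoid.of v))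
              rw [wlen_of] at this
              omega
            have hts : occ u s = 0 := by
              have := occ_mul u s (CFmk G (FreeMonoid.of v))
              rw [occ_of, if_neg hvu] at this
              omega
            have hts' : occ u s' = 0 := by
              have := occ_mul u s' (CFmk G (FreeMonoid.of v))
              rw [occ_of, if_neg hvu] at this
              omega
            obtain ⟨hPP, hss⟩ := ih s s' P P' hsN hP hP' hts hts' heq'
            exact ⟨hPP, by rw [hss]⟩

lemma occ_prod (u : V) (l : List (CF G)) : occ u l.prod = (l.map (occ u)).sum := by
  induction l with
  | nil => simpa using occ_one (G := G) u
  | cons a t ih => rw [List.prod_cons, occ_mul, ih, List.map_cons, List.sum_cons]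

lemma IA_prod_subset (u : V) (l : List (CF G)) (h : ∀ wi ∈ l, IA wi ⊆ {u}) :
    IA l.prod ⊆ {u} := by
  induction l with
  | nil =>
      rw [List.prod_nil, IA_one]
      exact Set.empty_subset _
  | cons a t ih =>
      rw [List.prod_cons]
      intro v hv
      rcases IA_mul_subset' hv with hh | hh
      · exact h a (by simp) hh
      · exact ih (fun wi hwi => h wi (List.mem_cons_of_mem a hwi)) hh

lemma umain (u : V) : ∀ p p' : List (CF G),
    (∀ wi ∈ p, occ u wi = 1 ∧ IA wi = {u}) →
    (∀ wi ∈ p', occ u wi = 1 ∧ IA wi = {u}) →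
    p.prod = p'.prod → p = p' := by
  intro p
  induction p using List.reverseRecOn with
  | nil =>
      intro p' _ hp' heq
      rcases List.eq_nil_or_concat p' with rfl | ⟨q', z', rfl⟩
      · rfl
      · exfalso
        simp only [List.concat_eq_append] at hp' heq
        have h0 : occ u (q' ++ [z']).prod = 0 := by
          rw [← heq, List.prod_nil, occ_one]
        have hz' := (hp' z' (by simp)).1
        rw [occ_prod] at h0
        have : (1:ℕ) ≤ ((q' ++ [z']).map (occ u)).sum := by
          refine List.single_le_sum (fun x hx => Nat.zero_le x) 1 ?_
          rw [← hz']
          simp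
        omega
  | append_singleton q z ih =>
      intro p' hp hp' heq
      rcases List.eq_nil_or_concat p' with rfl | ⟨q', z', rfl⟩
      · exfalso
        have h0 : occ u (q ++ [z]).prod = 0 := by
          rw [heq, List.prod_nil, occ_one]
        have hz := (hp z (by simp)).1
        rw [occ_prod] at h0
        have : (1:ℕ) ≤ ((q ++ [z]).map (occ u)).sum := by
          refine List.single_le_sum (fun x hx => Nat.zero_le x) 1 ?_
          rw [← hz]
          simp
        omega
      · simp only [List.concat_eq_append] at hp' heq
        obtain ⟨hoz, hIz⟩ := hp z (by simp)
        obtain ⟨hoz', hIz'⟩ := hp' z' (by simp)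
        have huz : u ∈ IA z := hIz ▸ rfl
        have huz' : u ∈ IA z' := hIz' ▸ rfl
        obtain ⟨s, hs⟩ := huz
        obtain ⟨s', hs'⟩ := huz'
        have hos : occ u s = 0 := by
          have := occ_mul u s (CFmk G (FreeMonoid.of u))
          rw [← hs, occ_of, if_pos rfl, hoz] at this
          omega
        have hos' : occ u s' = 0 := by
          have := occ_mul u s' (CFmk G (FreeMonoid.of u))
          rw [← hs', occ_of, if_pos rfl, hoz'] at this
          omega
        have heq2 : (q.prod * s) * CFmk G (FreeMonoid.of u) =
            (q'.prod * s') * CFmk G (FreeMonoid.of u) := by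
          rw [mul_assoc, mul_assoc, ← hs, ← hs']
          rw [List.prod_append, List.prod_singleton] at heq
          rw [List.prod_append, List.prod_singleton] at heq
          exact heq
        have heq3 := cancel_of heq2
        have hIq : IA q.prod ⊆ {u} :=
          IA_prod_subset u q (fun wi hwi => (hp wi (by simp [hwi])).2 ▸ subset_rfl)
        have hIq' : IA q'.prod ⊆ {u} :=
          IA_prod_subset u q' (fun wi hwi => (hp' wi (by simp [hwi])).2 ▸ subset_rfl)
        obtain ⟨hQQ, hss⟩ := ucore u (wlen s) s s' q.prod q'.prod le_rfl hIq hIq' hos hos' heq3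
        have hzz : z = z' := by rw [hs, hs', hss]
        have hqq : q = q' := ih q' (fun wi hwi => hp wi (by simp [hwi]))
          (fun wi hwi => hp' wi (by simp [hwi])) hQQ
        rw [hzz, hqq, List.concat_eq_append]


variable {V : Type*} [DecidableEq V] {G : SimpleGraph V}

lemma nat_len_le_sum : ∀ l : List ℕ, (∀ x ∈ l, 1 ≤ x) → l.length ≤ l.sum := by
  intro l
  induction l with
  | nil => simp
  | cons a t ih =>
      intro h
      rw [List.length_cons, List.sum_cons]
      have := ih (fun y hy => h y (by simp [hy]))
      have := h a (by simp)
      omega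

lemma nat_all_one : ∀ l : List ℕ, (∀ x ∈ l, 1 ≤ x) → l.sum = l.length → ∀ x ∈ l, x = 1 := by
  intro l
  induction l with
  | nil => intro _ _ x hx; simp at hx
  | cons a t ih =>
      intro h1 hsum x hx
      have hlen : t.length ≤ t.sum := nat_len_le_sum t (fun y hy => h1 y (by simp [hy]))
      rw [List.sum_cons, List.length_cons] at hsum
      have ha : a = 1 := by have := h1 a (by simp); omega
      rcases List.mem_cons.mp hx with rfl | hx'
      · exact ha
      · exact ih (fun y hy => h1 y (by simp [hy])) (by omega) x hx'




end CFaux2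

/-- The ia-decomposition: every nonempty word `w` with `IA(w) ⊆ {u}` factors
uniquely as `w = w₁ ⋯ w_k` with `k = u(w)`, where each `w_i` is nonempty with
initial alphabet multiset exactly `{u}` (i.e. `IA(w_i) = {u}` and `u` has
multiplicity one in the initial alphabet multiset of `w_i`). -/
theorem stmt_8 {V : Type*} [Fintype V] [DecidableEq V] (G : SimpleGraph V) (u : V)
    (w : CF G) (hw : w ≠ 1) (hIA : IA w ⊆ {u}) :
    ∃! ws : List (CF G),
      ws.length = occ u w ∧ ws.prod = w ∧
      ∀ wi ∈ ws, wi ≠ 1 ∧ IA wi = {u} ∧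
        ¬ ∃ y : CF G, wi = y * CFmk G (FreeMonoid.of u) * CFmk G (FreeMonoid.of u) := by
  classical
  obtain ⟨ws, hl, hp, hf⟩ := CFaux.exU u (wlen w) w le_rfl hw hIA
  refine ⟨ws, ⟨hl, hp, ?_⟩, ?_⟩
  · intro wi hwi
    obtain ⟨ho, hI⟩ := hf wi hwi
    refine ⟨?_, hI, ?_⟩
    · intro hh
      rw [hh, CFaux.occ_one] at ho
      exact one_ne_zero ho.symm
    · rintro ⟨y, hy⟩
      have h2 : occ u wi = occ u y + 2 := by
        rw [hy, CFaux.occ_mul, CFaux.occ_mul, CFaux.occ_of, if_pos rfl]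
      omega
  · intro ws' hws'
    obtain ⟨hl', hp', hf'⟩ := hws'
    have hsum : (ws'.map (occ u)).sum = (ws'.map (occ u)).length := by
      rw [← CFaux2.occ_prod, hp', List.length_map, ← hl']
    have h1 : ∀ x ∈ ws'.map (occ u), 1 ≤ x := by
      intro x hx
      obtain ⟨wj, hwj, rfl⟩ := List.mem_map.mp hx
      have hIj := (hf' wj hwj).2.1
      exact CFaux.occ_pos_of_mem_IA (show u ∈ IA wj from hIj ▸ rfl)
    have hocc1 : ∀ wi ∈ ws', occ u wi = 1 := by
      intro wi hwi
      exact CFaux2.nat_all_one _ h1 hsum _ (List.mem_map.mpr ⟨wi, hwi, rfl⟩)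
    exact CFaux2.umain u ws' ws
      (fun wi hwi => ⟨hocc1 wi hwi, (hf' wi hwi).2.1⟩)
      (fun wi hwi => hf wi hwi)
      (hp'.trans hp.symm)
end

section
/- Let G be a finite simple graph with Cartier–Foata monoid M, let u ∈ V(G), and let w ∈ M be a nonempty word with IA(w) = {u} and in which u occurs exactly once. Write N_G(u, w) = {u₁ < ⋯ < u_d} for the set of neighbors of u that occur in w (in a fixed total order on V(G)). Then there exist unique words w₁, …, w_d ∈ M (possibly empty) such that: (i) w = w₁ ⋯ w_d · u; (ii) if w_i is nonempty then IA(w_i) = {u_i}; and (iii) for all i < j, the vertex u_i does not occur in w_j. -/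
section Infra

variable {V : Type*} {G : SimpleGraph V}

/-- two letters commute -/
def Comm (G : SimpleGraph V) (a b : V) : Prop := a ≠ b ∧ ¬ G.Adj a b

lemma Comm.symm {a b : V} (h : Comm G a b) : Comm G b a :=
  ⟨h.1.symm, fun hadj => h.2 hadj.symm⟩

/-- one swap step on lists -/
def Step (G : SimpleGraph V) (l l' : List V) : Prop :=
  ∃ (c₁ c₂ : List V) (a b : V), Comm G a b ∧
    l = c₁ ++ a :: b :: c₂ ∧ l' = c₁ ++ b :: a :: c₂

lemma Step.symm {l l' : List V} (h : Step G l l') : Step G l' l := by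
  obtain ⟨c₁, c₂, a, b, hc, h1, h2⟩ := h
  exact ⟨c₁, c₂, b, a, hc.symm, h2, h1⟩

def SwapEq (G : SimpleGraph V) : List V → List V → Prop :=
  Relation.ReflTransGen (Step G)

lemma SwapEq.refl (l : List V) : SwapEq G l l := Relation.ReflTransGen.refl

lemma SwapEq.trans {a b c : List V} (h : SwapEq G a b) (h' : SwapEq G b c) :
    SwapEq G a c := Relation.ReflTransGen.trans h h'

lemma Step.swapEq {a b : List V} (h : Step G a b) : SwapEq G a b :=
  Relation.ReflTransGen.single h

lemma SwapEq.symm {a b : List V} (h : SwapEq G a b) : SwapEq G b a := by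
  induction h with
  | refl => exact SwapEq.refl _
  | tail _ h2 ih => exact (Step.swapEq (h2.symm)).trans ih

lemma Step.append_left {a b : List V} (c : List V) (h : Step G a b) :
    Step G (c ++ a) (c ++ b) := by
  obtain ⟨c₁, c₂, x, y, hc, h1, h2⟩ := h
  exact ⟨c ++ c₁, c₂, x, y, hc, by simp [h1], by simp [h2]⟩

lemma Step.append_right {a b : List V} (c : List V) (h : Step G a b) :
    Step G (a ++ c) (b ++ c) := by
  obtain ⟨c₁, c₂, x, y, hc, h1, h2⟩ := h
  exact ⟨c₁, c₂ ++ c, x, y, hc, by simp [h1], by simp [h2]⟩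

lemma SwapEq.append_left {a b : List V} (c : List V) (h : SwapEq G a b) :
    SwapEq G (c ++ a) (c ++ b) := by
  induction h with
  | refl => exact SwapEq.refl _
  | tail _ h2 ih => exact ih.trans (Step.swapEq (h2.append_left c))

lemma SwapEq.append_right {a b : List V} (c : List V) (h : SwapEq G a b) :
    SwapEq G (a ++ c) (b ++ c) := by
  induction h with
  | refl => exact SwapEq.refl _
  | tail _ h2 ih => exact ih.trans (Step.swapEq (h2.append_right c))

lemma SwapEq.append {a b c d : List V} (h : SwapEq G a b) (h' : SwapEq G c d) :
    SwapEq G (a ++ c) (b ++ d) :=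
  (h.append_right c).trans (h'.append_left b)

lemma SwapEq.cons {a b : List V} (x : V) (h : SwapEq G a b) :
    SwapEq G (x :: a) (x :: b) := h.append_left [x]

/-- the congruence on the free monoid given by SwapEq -/
def swapCon (G : SimpleGraph V) : Con (FreeMonoid V) where
  r a b := SwapEq G (FreeMonoid.toList a) (FreeMonoid.toList b)
  iseqv := ⟨fun _ => SwapEq.refl _, SwapEq.symm, SwapEq.trans⟩
  mul' h h' := by simpa using SwapEq.append h h'

lemma swapEq_cfcon : ∀ {l m : List V}, SwapEq G l m →
    CFCon G (FreeMonoid.ofList l) (FreeMonoid.ofList m) := by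
  intro l m h
  induction h with
  | refl => exact (CFCon G).refl _
  | tail h1 h2 ih =>
      refine (CFCon G).trans ih ?_
      obtain ⟨c₁, c₂, x, y, hc, rfl, rfl⟩ := h2
      have hxy : (CFCon G) (FreeMonoid.ofList [x, y]) (FreeMonoid.ofList [y, x]) :=
        ConGen.Rel.of _ _ ⟨x, y, hc.1, hc.2, rfl, rfl⟩
      have := (CFCon G).mul ((CFCon G).refl (FreeMonoid.ofList c₁))
        ((CFCon G).mul hxy ((CFCon G).refl (FreeMonoid.ofList c₂)))
      simpa [mul_assoc] using this

lemma cfcon_eq_swapCon : CFCon G = swapCon G := by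
  apply le_antisymm
  · apply Con.conGen_le.mpr
    rintro x y ⟨a, b, hne, hadj, rfl, rfl⟩
    exact Step.swapEq ⟨[], [], a, b, ⟨hne, hadj⟩, rfl, rfl⟩
  · intro a b h
    exact swapEq_cfcon h

/-- key transfer lemma -/
lemma cfmk_eq_iff {l m : List V} :
    CFmk G (FreeMonoid.ofList l) = CFmk G (FreeMonoid.ofList m) ↔ SwapEq G l m := by
  constructor
  · intro h
    have : (CFCon G) (FreeMonoid.ofList l) (FreeMonoid.ofList m) := by
      exact (Con.eq _).mp h
    rw [cfcon_eq_swapCon] at this; exact this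
  · intro h
    have : (CFCon G) (FreeMonoid.ofList l) (FreeMonoid.ofList m) := by
      rw [cfcon_eq_swapCon]; exact h
    exact (Con.eq _).mpr this

end Infra

section Counting

variable {V : Type*} {G : SimpleGraph V}

/-- abbreviation for the class of a list -/
def mkl (G : SimpleGraph V) (l : List V) : CF G := CFmk G (FreeMonoid.ofList l)

lemma mkl_nil : mkl G [] = 1 := by
  simp [mkl]

lemma mkl_append (l m : List V) : mkl G (l ++ m) = mkl G l * mkl G m := by
  simp [mkl]

lemma mkl_surj (w : CF G) : ∃ l : List V, w = mkl G l := by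
  obtain ⟨x, rfl⟩ := Con.mk'_surjective (c := CFCon G) w
  exact ⟨FreeMonoid.toList x, rfl⟩

lemma of_eq_mkl (v : V) : CFmk G (FreeMonoid.of v) = mkl G [v] := rfl

lemma CFab_of (v : V) :
    CFab G (CFmk G (FreeMonoid.of v)) = Multiplicative.ofAdd ({v} : Multiset V) := rfl

lemma CFab_mkl (l : List V) :
    CFab G (mkl G l) = Multiplicative.ofAdd (↑l : Multiset V) := by
  induction l with
  | nil => rfl
  | cons x xs ih =>
      rw [mkl] at ih ⊢
      rw [FreeMonoid.ofList_cons, map_mul, map_mul, ih, CFab_of]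
      rfl

lemma occ_mkl [DecidableEq V] (v : V) (l : List V) : occ v (mkl G l) = l.count v := by
  rw [occ, CFab_mkl]
  simp [Multiset.coe_count]

lemma wlen_mkl (l : List V) : wlen (mkl G l) = l.length := by
  rw [wlen, CFab_mkl]
  simp

lemma occ_mul [DecidableEq V] (v : V) (a b : CF G) :
    occ v (a * b) = occ v a + occ v b := by
  rw [occ, occ, occ, map_mul]
  simp only [toAdd_mul, Multiset.count_add]

lemma wlen_mul (a b : CF G) : wlen (a * b) = wlen a + wlen b := by
  rw [wlen, wlen, wlen, map_mul]
  simp only [toAdd_mul, Multiset.card_add]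

lemma occ_of [DecidableEq V] (v x : V) :
    occ v (CFmk G (FreeMonoid.of x)) = if v = x then 1 else 0 := by
  rw [of_eq_mkl, occ_mkl]
  rcases eq_or_ne v x with rfl | h
  · simp
  · simp [List.count_eq_zero, h, Ne.symm h]

lemma occ_one [DecidableEq V] (v : V) : occ v (1 : CF G) = 0 := by
  rw [← mkl_nil, occ_mkl]
  simp

lemma wlen_one : wlen (1 : CF G) = 0 := by
  rw [← mkl_nil, wlen_mkl]
  simp

lemma eq_one_of_wlen_eq_zero {w : CF G} (h : wlen w = 0) : w = 1 := by
  obtain ⟨l, rfl⟩ := mkl_surj w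
  rw [wlen_mkl] at h
  rw [List.length_eq_zero_iff] at h
  rw [h, mkl_nil]

lemma cf_mul_eq_one_iff {a b : CF G} : a * b = 1 ↔ a = 1 ∧ b = 1 := by
  constructor
  · intro h
    have := congrArg wlen h
    rw [wlen_mul, wlen_one] at this
    exact ⟨eq_one_of_wlen_eq_zero (by omega), eq_one_of_wlen_eq_zero (by omega)⟩
  · rintro ⟨rfl, rfl⟩; simp

lemma ne_one_iff_wlen {w : CF G} : w ≠ 1 ↔ 0 < wlen w := by
  constructor
  · intro h
    by_contra h'
    exact h (eq_one_of_wlen_eq_zero (by omega))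
  · intro h h'
    rw [h', wlen_one] at h; omega

end Counting

section Fdel

variable {V : Type*} {G : SimpleGraph V}

open Classical in
/-- remove the first occurrence of `v`, provided all letters before it commute with `v` -/
noncomputable def fdel (G : SimpleGraph V) (v : V) : List V → Option (List V)
  | [] => none
  | x :: xs => if x = v then some xs else
      if Comm G v x then (fdel G v xs).map (x :: ·) else none

lemma fdel_nil (v : V) : fdel G v [] = none := rfl

lemma fdel_cons_self (v : V) (t : List V) : fdel G v (v :: t) = some t := by
  simp [fdel]

lemma fdel_cons_comm {v x : V} (h : Comm G v x) (t : List V) :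
    fdel G v (x :: t) = (fdel G v t).map (x :: ·) := by
  simp [fdel, h, h.1.symm]

lemma fdel_cons_nocomm {v x : V} (hne : x ≠ v) (h : ¬ Comm G v x) (t : List V) :
    fdel G v (x :: t) = none := by
  simp [fdel, hne, h]

lemma fdel_sound {v : V} : ∀ {s t : List V}, fdel G v s = some t →
    ∃ s₁ s₂, s = s₁ ++ v :: s₂ ∧ t = s₁ ++ s₂ ∧ ∀ x ∈ s₁, Comm G v x := by
  intro s
  induction s with
  | nil => intro t h; simp [fdel] at h
  | cons x xs ih =>
      intro t h
      by_cases hx : x = v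
      · subst hx
        rw [fdel_cons_self] at h
        exact ⟨[], xs, rfl, by simpa using h.symm, by simp⟩
      · by_cases hc : Comm G v x
        · rw [fdel_cons_comm hc] at h
          rcases Option.map_eq_some_iff.mp h with ⟨t', ht', rfl⟩
          obtain ⟨s₁, s₂, rfl, rfl, hall⟩ := ih ht'
          refine ⟨x :: s₁, s₂, rfl, rfl, ?_⟩
          intro y hy
          rcases List.mem_cons.mp hy with rfl | hy
          · exact hc
          · exact hall y hy
        · rw [fdel_cons_nocomm hx hc] at h; exact absurd h (by simp)

lemma fdel_complete {v : V} : ∀ (s₁ s₂ : List V), (∀ x ∈ s₁, Comm G v x) →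
    fdel G v (s₁ ++ v :: s₂) = some (s₁ ++ s₂) := by
  intro s₁
  induction s₁ with
  | nil => intro s₂ _; simpa using fdel_cons_self v s₂
  | cons x xs ih =>
      intro s₂ hall
      have hx : Comm G v x := hall x (by simp)
      rw [List.cons_append, fdel_cons_comm hx, ih s₂ (fun y hy => hall y (by simp [hy]))]
      rfl

/-- equivalence of options up to SwapEq -/
def OEq (G : SimpleGraph V) (o o' : Option (List V)) : Prop :=
  (o = none ∧ o' = none) ∨ ∃ t t', o = some t ∧ o' = some t' ∧ SwapEq G t t'

lemma OEq.refl (o : Option (List V)) : OEq G o o := by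
  cases o with
  | none => exact Or.inl ⟨rfl, rfl⟩
  | some t => exact Or.inr ⟨t, t, rfl, rfl, SwapEq.refl t⟩

lemma OEq.trans {o₁ o₂ o₃ : Option (List V)} (h : OEq G o₁ o₂) (h' : OEq G o₂ o₃) :
    OEq G o₁ o₃ := by
  rcases h with ⟨h1, h2⟩ | ⟨t, t', ht, ht', hs⟩
  · rcases h' with ⟨_, h4⟩ | ⟨t, t', ht, _, _⟩
    · exact Or.inl ⟨h1, h4⟩
    · rw [h2] at ht; exact absurd ht (by simp)
  · rcases h' with ⟨h3, h4⟩ | ⟨s, s', hs', hs'', hsw⟩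
    · rw [ht'] at h3; exact absurd h3 (by simp)
    · rw [ht'] at hs'
      obtain rfl : t' = s := by injection hs'
      exact Or.inr ⟨t, s', ht, hs'', hs.trans hsw⟩

lemma OEq.map_cons {o o' : Option (List V)} (x : V) (h : OEq G o o') :
    OEq G (o.map (x :: ·)) (o'.map (x :: ·)) := by
  rcases h with ⟨h1, h2⟩ | ⟨t, t', ht, ht', hs⟩
  · subst h1; subst h2; exact Or.inl ⟨rfl, rfl⟩
  · subst ht; subst ht'; exact Or.inr ⟨x :: t, x :: t', rfl, rfl, hs.cons x⟩

lemma fdel_step {v : V} {l l' : List V} (h : Step G l l') :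
    OEq G (fdel G v l) (fdel G v l') := by
  obtain ⟨c₁, c₂, a, b, hc, rfl, rfl⟩ := h
  induction c₁ with
  | cons x xs ih =>
      by_cases hx : x = v
      · subst hx
        rw [List.cons_append, List.cons_append, fdel_cons_self, fdel_cons_self]
        exact Or.inr ⟨_, _, rfl, rfl, Step.swapEq ⟨xs, c₂, a, b, hc, rfl, rfl⟩⟩
      · by_cases hcx : Comm G v x
        · rw [List.cons_append, List.cons_append, fdel_cons_comm hcx, fdel_cons_comm hcx]
          exact ih.map_cons x
        · rw [List.cons_append, List.cons_append, fdel_cons_nocomm hx hcx,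
            fdel_cons_nocomm hx hcx]
          exact Or.inl ⟨rfl, rfl⟩
  | nil =>
      simp only [List.nil_append]
      by_cases ha : a = v
      · subst ha
        rw [fdel_cons_self]
        have hb : Comm G a b := hc
        rw [fdel_cons_comm hb, fdel_cons_self]
        exact Or.inr ⟨_, _, rfl, rfl, SwapEq.refl _⟩
      · by_cases hb : b = v
        · subst hb
          have ha' : Comm G b a := hc.symm
          rw [fdel_cons_comm ha', fdel_cons_self, fdel_cons_self]
          exact Or.inr ⟨_, _, rfl, rfl, SwapEq.refl _⟩
        · by_cases hva : Comm G v a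
          · by_cases hvb : Comm G v b
            · rw [fdel_cons_comm hva, fdel_cons_comm hvb, fdel_cons_comm hvb,
                fdel_cons_comm hva]
              cases hfc : fdel G v c₂ with
              | none => exact Or.inl ⟨rfl, rfl⟩
              | some t =>
                  exact Or.inr ⟨_, _, rfl, rfl,
                    Step.swapEq ⟨[], t, a, b, hc, rfl, rfl⟩⟩
            · rw [fdel_cons_comm hva, fdel_cons_nocomm hb hvb, fdel_cons_nocomm hb hvb]
              exact Or.inl ⟨by simp, rfl⟩
          · by_cases hvb : Comm G v b
            · rw [fdel_cons_nocomm ha hva, fdel_cons_comm hvb, fdel_cons_nocomm ha hva]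
              exact Or.inl ⟨rfl, by simp⟩
            · rw [fdel_cons_nocomm ha hva, fdel_cons_nocomm hb hvb]
              exact Or.inl ⟨rfl, rfl⟩

lemma fdel_swapEq {v : V} {l l' : List V} (h : SwapEq G l l') :
    OEq G (fdel G v l) (fdel G v l') := by
  induction h with
  | refl => exact OEq.refl _
  | tail _ h2 ih => exact ih.trans (fdel_step h2)

end Fdel

section IAchar

variable {V : Type*} {G : SimpleGraph V}

lemma Step.reverse {l l' : List V} (h : Step G l l') :
    Step G l.reverse l'.reverse := by
  obtain ⟨c₁, c₂, a, b, hc, rfl, rfl⟩ := h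
  refine ⟨c₂.reverse, c₁.reverse, b, a, hc.symm, ?_, ?_⟩ <;> simp

lemma SwapEq.reverse {l l' : List V} (h : SwapEq G l l') :
    SwapEq G l.reverse l'.reverse := by
  induction h with
  | refl => exact SwapEq.refl _
  | tail _ h2 ih => exact ih.trans (Step.swapEq h2.reverse)

lemma swapEq_cons_append {v : V} : ∀ (m : List V), (∀ x ∈ m, Comm G v x) →
    SwapEq G (v :: m) (m ++ [v]) := by
  intro m
  induction m with
  | nil => intro _; exact SwapEq.refl _
  | cons x xs ih =>
      intro h
      have h1 : Step G (v :: x :: xs) (x :: v :: xs) :=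
        ⟨[], xs, v, x, h x (by simp), rfl, rfl⟩
      exact (Step.swapEq h1).trans ((ih (fun y hy => h y (by simp [hy]))).cons x)

lemma mkl_middle {v : V} (l₁ l₂ : List V) (h : ∀ x ∈ l₂, Comm G v x) :
    mkl G (l₁ ++ v :: l₂) = mkl G (l₁ ++ l₂) * CFmk G (FreeMonoid.of v) := by
  have : SwapEq G (v :: l₂) (l₂ ++ [v]) := swapEq_cons_append l₂ h
  have h2 : SwapEq G (l₁ ++ v :: l₂) (l₁ ++ (l₂ ++ [v])) := this.append_left l₁
  have := (cfmk_eq_iff (G := G)).mpr h2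
  rw [mkl, this]
  rw [show l₁ ++ (l₂ ++ [v]) = (l₁ ++ l₂) ++ [v] by simp]
  rw [← mkl, mkl_append, of_eq_mkl]

lemma mem_IA_iff {v : V} {l : List V} :
    v ∈ IA (mkl G l) ↔ ∃ l₁ l₂, l = l₁ ++ v :: l₂ ∧ ∀ x ∈ l₂, Comm G v x := by
  constructor
  · rintro ⟨m', hm⟩
    obtain ⟨m, rfl⟩ := mkl_surj m'
    rw [of_eq_mkl v, ← mkl_append] at hm
    have hsw : SwapEq G l (m ++ [v]) := (cfmk_eq_iff).mp hm
    have hrev : SwapEq G l.reverse (v :: m.reverse) := by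
      have := hsw.reverse
      simpa using this
    have := (fdel_swapEq (v := v) hrev)
    rw [fdel_cons_self] at this
    rcases this with ⟨_, h2⟩ | ⟨t, t', ht, _, _⟩
    · exact absurd h2 (by simp)
    · obtain ⟨s₁, s₂, hrl, _, hall⟩ := fdel_sound ht
      refine ⟨s₂.reverse, s₁.reverse, ?_, ?_⟩
      · have := congrArg List.reverse hrl
        simpa using this
      · intro x hx
        exact hall x (by simpa using hx)
  · rintro ⟨l₁, l₂, rfl, h⟩
    exact ⟨mkl G (l₁ ++ l₂), mkl_middle l₁ l₂ h⟩

lemma cancel_of {v : V} {a b : CF G} (h : a * CFmk G (FreeMonoid.of v) = b * CFmk G (FreeMonoid.of v)) :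
    a = b := by
  obtain ⟨la, rfl⟩ := mkl_surj a
  obtain ⟨lb, rfl⟩ := mkl_surj b
  rw [of_eq_mkl, ← mkl_append, ← mkl_append] at h
  have hsw : SwapEq G (la ++ [v]) (lb ++ [v]) := (cfmk_eq_iff).mp h
  have hrev : SwapEq G (v :: la.reverse) (v :: lb.reverse) := by
    have := hsw.reverse; simpa using this
  have := fdel_swapEq (v := v) hrev
  rw [fdel_cons_self, fdel_cons_self] at this
  rcases this with ⟨h1, _⟩ | ⟨t, t', ht, ht', hs⟩
  · exact absurd h1 (by simp)
  · obtain rfl : la.reverse = t := by injection ht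
    obtain rfl : lb.reverse = t' := by injection ht'
    have : SwapEq G la lb := by
      have := hs.reverse; simpa using this
    exact (cfmk_eq_iff).mpr this

lemma cancel_right {a b s : CF G} (h : a * s = b * s) : a = b := by
  obtain ⟨ls, rfl⟩ := mkl_surj s
  induction ls generalizing a b with
  | nil => rw [mkl_nil, mul_one, mul_one] at h; exact h
  | cons x xs ih =>
      rw [show (x :: xs : List V) = [x] ++ xs by rfl, mkl_append, ← mul_assoc,
        ← mul_assoc] at h
      have := ih h
      rw [← of_eq_mkl] at this
      exact cancel_of this

end IAchar

section IAlemmas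

variable {V : Type*} {G : SimpleGraph V} [DecidableEq V]

lemma IA_one : IA (1 : CF G) = ∅ := by
  ext v
  simp only [Set.mem_empty_iff_false, iff_false]
  intro hv
  rw [← mkl_nil] at hv
  obtain ⟨l₁, l₂, h, -⟩ := mem_IA_iff.mp hv
  simp at h

lemma IA_nonempty {w : CF G} (h : w ≠ 1) : ∃ v, v ∈ IA w := by
  obtain ⟨l, rfl⟩ := mkl_surj w
  cases hl : l.reverse with
  | nil =>
      exfalso
      apply h
      have : l = [] := by simpa using congrArg List.reverse hl
      rw [this, mkl_nil]
  | cons x xs =>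
      have : l = xs.reverse ++ x :: [] := by
        have := congrArg List.reverse hl
        simpa using this
      exact ⟨x, mem_IA_iff.mpr ⟨xs.reverse, [], this, by simp⟩⟩

lemma mem_IA_self (a : CF G) (v : V) : v ∈ IA (a * CFmk G (FreeMonoid.of v)) := ⟨a, rfl⟩

lemma mem_IA_mul_right {v : V} {b : CF G} (a : CF G) (h : v ∈ IA b) :
    v ∈ IA (a * b) := by
  obtain ⟨m, hm⟩ := h
  exact ⟨a * m, by rw [hm, mul_assoc]⟩

lemma mem_IA_occ {v : V} {w : CF G} (h : v ∈ IA w) : 0 < occ v w := by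
  obtain ⟨l, rfl⟩ := mkl_surj w
  obtain ⟨l₁, l₂, rfl, -⟩ := mem_IA_iff.mp h
  rw [occ_mkl]
  have : v ∈ l₁ ++ v :: l₂ := by simp
  exact List.count_pos_iff.mpr this

lemma mem_IA_of_mul {v : V} {a b : CF G} (h : v ∈ IA (a * b)) :
    v ∈ IA b ∨ (v ∈ IA a ∧ ∀ x, 0 < occ x b → Comm G v x) := by
  obtain ⟨la, rfl⟩ := mkl_surj a
  obtain ⟨lb, rfl⟩ := mkl_surj b
  rw [← mkl_append] at h
  obtain ⟨l₁, l₂, heq, hall⟩ := mem_IA_iff.mp h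
  rcases List.append_eq_append_iff.mp heq with ⟨a', ha1, ha2⟩ | ⟨c', hc1, hc2⟩
  · -- lb = a' ++ v :: l₂
    exact Or.inl (mem_IA_iff.mpr ⟨a', l₂, ha2, hall⟩)
  · -- la = l₁ ++ c', v :: l₂ = c' ++ lb
    cases c' with
    | nil =>
        simp only [List.nil_append] at hc2
        exact Or.inl (mem_IA_iff.mpr ⟨[], l₂, by simp [hc2], hall⟩)
    | cons y c'' =>
        obtain ⟨rfl, hl₂⟩ : y = v ∧ l₂ = c'' ++ lb := by
          constructor
          · exact (List.cons_eq_cons.mp hc2).1.symm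
          · have := (List.cons_eq_cons.mp hc2).2
            simp only [List.append_eq] at this
            exact this
        refine Or.inr ⟨mem_IA_iff.mpr ⟨l₁, c'', hc1, ?_⟩, ?_⟩
        · intro x hx
          exact hall x (by rw [hl₂]; exact List.mem_append_left _ hx)
        · intro x hx
          rw [occ_mkl, List.count_pos_iff] at hx
          exact hall x (by rw [hl₂]; exact List.mem_append_right _ hx)

lemma IA_of (v : V) : IA (CFmk G (FreeMonoid.of v)) = {v} := by
  ext x
  simp only [Set.mem_singleton_iff]
  constructor
  · intro hx
    rw [of_eq_mkl] at hx
    obtain ⟨l₁, l₂, h, -⟩ := mem_IA_iff.mp hx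
    rcases l₁ with _ | ⟨y, l₁⟩
    · simpa using (List.cons_eq_cons.mp (by simpa using h)).1.symm
    · exfalso
      have := congrArg List.length h
      simp at this
  · rintro rfl
    exact ⟨1, by rw [one_mul]⟩

lemma comm_of_word {v : V} {b : CF G} (h : ∀ x, 0 < occ x b → Comm G v x) :
    CFmk G (FreeMonoid.of v) * b = b * CFmk G (FreeMonoid.of v) := by
  obtain ⟨m, rfl⟩ := mkl_surj b
  have hm : ∀ x ∈ m, Comm G v x := by
    intro x hx
    exact h x (by rw [occ_mkl]; exact List.count_pos_iff.mpr hx)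
  have := (cfmk_eq_iff (G := G)).mpr (swapEq_cons_append m hm)
  rw [of_eq_mkl, ← mkl_append, ← mkl_append]
  exact this

lemma mem_IA_mul_single {x v : V} {a : CF G}
    (h : x ∈ IA (a * CFmk G (FreeMonoid.of v))) :
    x = v ∨ (Comm G x v ∧ x ∈ IA a) := by
  rcases mem_IA_of_mul h with h1 | ⟨h1, h2⟩
  · rw [IA_of] at h1
    exact Or.inl h1
  · refine Or.inr ⟨h2 v ?_, h1⟩
    rw [occ_of]
    simp

lemma mem_IA_mul_indep {x : V} {a b : CF G} (hx : x ∈ IA a)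
    (h : ∀ y, 0 < occ y b → Comm G x y) : x ∈ IA (a * b) := by
  obtain ⟨a', ha⟩ := hx
  rw [ha, mul_assoc, comm_of_word h, ← mul_assoc]
  exact mem_IA_self _ _

lemma mem_IA_prod {v : V} : ∀ {l : List (CF G)}, v ∈ IA l.prod → ∃ a ∈ l, v ∈ IA a := by
  intro l
  induction l with
  | nil => intro h; rw [List.prod_nil] at h; rw [IA_one] at h; exact absurd h (by simp)
  | cons a t ih =>
      intro h
      rw [List.prod_cons] at h
      rcases mem_IA_of_mul h with h1 | ⟨h1, -⟩
      · obtain ⟨b, hb, hvb⟩ := ih h1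
        exact ⟨b, by simp [hb], hvb⟩
      · exact ⟨a, by simp, h1⟩

end IAlemmas

section Levi

variable {V : Type*} {G : SimpleGraph V} [DecidableEq V]

/-- all letters of `a` commute with all letters of `b` -/
def WIndep (G : SimpleGraph V) (a b : CF G) : Prop :=
  ∀ x y, 0 < occ x a → 0 < occ y b → Comm G x y

lemma levi_aux : ∀ (ld : List V) (a b c : CF G), a * b = c * mkl G ld →
    ∃ u1 u2 u3 u4 : CF G, a = u1 * u2 ∧ b = u3 * u4 ∧ c = u1 * u3 ∧
      mkl G ld = u2 * u4 ∧ WIndep G u2 u3 := by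
  intro ld
  induction ld using List.reverseRecOn with
  | nil =>
      intro a b c h
      rw [mkl_nil, mul_one] at h
      refine ⟨a, 1, b, 1, by simp, by simp, by rw [← h], by rw [mkl_nil]; simp, ?_⟩
      intro x y hx _
      rw [occ_one] at hx; omega
  | append_singleton ld v ih =>
      intro a b c h
      rw [mkl_append, ← of_eq_mkl, ← mul_assoc] at h
      have hv : v ∈ IA (a * b) := by rw [h]; exact mem_IA_self _ _
      rcases mem_IA_of_mul hv with hvb | ⟨hva, hcomm⟩
      · obtain ⟨b', hb'⟩ := hvb
        rw [hb', ← mul_assoc] at h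
        have h2 : a * b' = c * mkl G ld := cancel_of h
        obtain ⟨u1, u2, u3, u4, e1, e2, e3, e4, hind⟩ := ih a b' c h2
        refine ⟨u1, u2, u3, u4 * CFmk G (FreeMonoid.of v), e1, ?_, e3, ?_, ?_⟩
        · rw [hb', e2, mul_assoc]
        · rw [mkl_append, ← of_eq_mkl, e4, mul_assoc]
        · exact hind
      · obtain ⟨a', ha'⟩ := hva
        have hcomm' : CFmk G (FreeMonoid.of v) * b = b * CFmk G (FreeMonoid.of v) :=
          comm_of_word (fun x hx => hcomm x hx)
        rw [ha', mul_assoc, hcomm', ← mul_assoc] at h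
        have h2 : a' * b = c * mkl G ld := cancel_of h
        obtain ⟨u1, u2, u3, u4, e1, e2, e3, e4, hind⟩ := ih a' b c h2
        have hu4 : CFmk G (FreeMonoid.of v) * u4 = u4 * CFmk G (FreeMonoid.of v) := by
          refine comm_of_word (fun y hy => hcomm y ?_)
          rw [e2, occ_mul]; omega
        refine ⟨u1, u2 * CFmk G (FreeMonoid.of v), u3, u4, ?_, e2, e3, ?_, ?_⟩
        · rw [ha', e1, mul_assoc]
        · rw [mkl_append, ← of_eq_mkl, e4, mul_assoc, mul_assoc, hu4]
        · intro x y hx hy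
          rw [occ_mul, occ_of] at hx
          by_cases hxv : x = v
          · subst hxv
            refine hcomm y ?_
            rw [e2, occ_mul]; omega
          · simp [hxv] at hx
            exact hind x y (by omega) hy

lemma levi {a b c d : CF G} (h : a * b = c * d) :
    ∃ u1 u2 u3 u4 : CF G, a = u1 * u2 ∧ b = u3 * u4 ∧ c = u1 * u3 ∧
      d = u2 * u4 ∧ WIndep G u2 u3 := by
  obtain ⟨ld, rfl⟩ := mkl_surj d
  exact levi_aux ld a b c h

lemma block_unique {A : Set V} {r s r' s' : CF G}
    (h : r * s = r' * s') (hr : IA r ⊆ A) (hr' : IA r' ⊆ A)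
    (hs : ∀ x ∈ A, occ x s = 0) (hs' : ∀ x ∈ A, occ x s' = 0) :
    r = r' ∧ s = s' := by
  obtain ⟨u1, u2, u3, u4, e1, e2, e3, e4, hind⟩ := levi h
  have hu2 : u2 = 1 := by
    by_contra hne
    obtain ⟨x, hx⟩ := IA_nonempty hne
    have hxA : x ∈ A := hr (by rw [e1]; exact mem_IA_mul_right u1 hx)
    have : 0 < occ x s' := by
      rw [e4, occ_mul]
      have := mem_IA_occ hx
      omega
    rw [hs' x hxA] at this; omega
  have hu3 : u3 = 1 := by
    by_contra hne
    obtain ⟨x, hx⟩ := IA_nonempty hne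
    have hxA : x ∈ A := hr' (by rw [e3]; exact mem_IA_mul_right u1 hx)
    have : 0 < occ x s := by
      rw [e2, occ_mul]
      have := mem_IA_occ hx
      omega
    rw [hs x hxA] at this; omega
  subst hu2; subst hu3
  simp only [mul_one, one_mul] at e1 e2 e3 e4
  exact ⟨e1.trans e3.symm, e2.trans e4.symm⟩

end Levi

section Main

variable {V : Type*} {G : SimpleGraph V} [DecidableEq V]

/-- the decomposition conditions -/
def Good (G : SimpleGraph V) (L : List V) (w' : CF G) (ws : List (CF G)) : Prop :=
  ws.length = L.length ∧ ws.prod = w' ∧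
  (∀ (i : ℕ) (h1 : i < L.length) (h2 : i < ws.length),
      ws.get ⟨i, h2⟩ ≠ 1 → IA (ws.get ⟨i, h2⟩) = {L.get ⟨i, h1⟩}) ∧
  (∀ (i j : ℕ) (h1 : i < L.length) (h2 : j < ws.length), i < j →
      occ (L.get ⟨i, h1⟩) (ws.get ⟨j, h2⟩) = 0)

lemma exists_max_suffix (L' : List V) (z : V) (w' : CF G) :
    ∃ r s : CF G, w' = r * s ∧ IA s ⊆ {z} ∧ (∀ i ∈ L', occ i s = 0) ∧
      ∀ s' r' : CF G, w' = r' * s' → IA s' ⊆ {z} → (∀ i ∈ L', occ i s' = 0) →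
        wlen s' ≤ wlen s := by
  classical
  set P : ℕ → Prop := fun n => ∃ s r : CF G, w' = r * s ∧ wlen s = n ∧ IA s ⊆ {z} ∧
    ∀ i ∈ L', occ i s = 0 with hPdef
  have hP0 : P 0 := ⟨1, w', by simp, wlen_one, by rw [IA_one]; simp, fun i _ => occ_one i⟩
  have hbound : ∀ n, P n → n ≤ wlen w' := by
    rintro n ⟨s, r, rfl, rfl, -, -⟩
    rw [wlen_mul]; omega
  have hspec : P (Nat.findGreatest P (wlen w')) :=
    Nat.findGreatest_spec (Nat.zero_le _) hP0
  obtain ⟨s, r, h1, h2, h3, h4⟩ := hspec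
  refine ⟨r, s, h1, h3, h4, ?_⟩
  intro s' r' h1' h3' h4'
  rw [h2]
  exact Nat.le_findGreatest (hbound _ ⟨s', r', h1', rfl, h3', h4'⟩)
    ⟨s', r', h1', rfl, h3', h4'⟩

lemma step_decomp {L' : List V} {z : V} (hz : z ∉ L') {w' : CF G}
    (hIA : IA w' ⊆ {v | v ∈ L' ++ [z]}) :
    ∃ r s : CF G, w' = r * s ∧ IA s ⊆ {z} ∧ (∀ i ∈ L', occ i s = 0) ∧
      IA r ⊆ {v | v ∈ L'} := by
  obtain ⟨r, s, h1, h3, h4, hmax⟩ := exists_max_suffix L' z w'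
  refine ⟨r, s, h1, h3, h4, ?_⟩
  intro x hx
  simp only [Set.mem_setOf_eq]
  by_contra hxL
  obtain ⟨r', hr'⟩ := hx
  set s' := CFmk G (FreeMonoid.of x) * s with hs'def
  have hw : w' = r' * s' := by rw [h1, hr', mul_assoc]
  have hocc : ∀ i ∈ L', occ i s' = 0 := by
    intro i hi
    have hix : ¬ (i = x) := fun h => hxL (h ▸ hi)
    rw [hs'def, occ_mul, occ_of, if_neg hix, h4 i hi]
  have hnsub : ¬ (IA s' ⊆ {z}) := by
    intro hsub
    have hle := hmax s' r' hw hsub hocc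
    rw [hs'def, wlen_mul, of_eq_mkl, wlen_mkl] at hle
    simp at hle
  rw [Set.not_subset] at hnsub
  obtain ⟨y, hy, hyz⟩ := hnsub
  simp only [Set.mem_singleton_iff] at hyz
  rcases mem_IA_of_mul hy with h5 | ⟨h5, -⟩
  · exact hyz (h3 h5)
  · rw [IA_of] at h5
    rw [Set.mem_singleton_iff] at h5
    subst h5
    have hxw : y ∈ IA w' := by rw [hw]; exact mem_IA_mul_right _ hy
    have := hIA hxw
    simp only [Set.mem_setOf_eq, List.mem_append, List.mem_singleton] at this
    rcases this with h6 | h6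
    · exact hxL h6
    · exact hyz h6

lemma main_aux : ∀ (L : List V), L.Nodup → ∀ w' : CF G, IA w' ⊆ {v | v ∈ L} →
    ∃! ws : List (CF G), Good G L w' ws := by
  intro L
  induction L using List.reverseRecOn with
  | nil =>
      intro _ w' hIA
      have hw' : w' = 1 := by
        by_contra h
        obtain ⟨v, hv⟩ := IA_nonempty h
        simpa using hIA hv
      refine ⟨[], ⟨by simp, by simp [hw'], ?_, ?_⟩, ?_⟩
      · intro i h1; simp at h1
      · intro i j h1; simp at h1
      · rintro ws2 ⟨hlen, -, -, -⟩
        simpa using List.length_eq_zero_iff.mp (by simpa using hlen)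
  | append_singleton L' z ih =>
      intro hnd w' hIA
      have hndL' : L'.Nodup := (List.nodup_append.mp hnd).1
      have hz : z ∉ L' := by
        intro hzz
        exact (List.nodup_append'.mp hnd).2.2 hzz (by simp)
      obtain ⟨r, s, hw, hIAs, hoccs, hIAr⟩ := step_decomp hz hIA
      obtain ⟨ws', hgood', huniq'⟩ := ih hndL' r hIAr
      obtain ⟨hlen', hprod', hcond3', hcond4'⟩ := hgood'
      have hlen : (ws' ++ [s]).length = (L' ++ [z]).length := by simp [hlen']
      refine ⟨ws' ++ [s], ⟨hlen, ?_, ?_, ?_⟩, ?_⟩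
      · rw [List.prod_append, List.prod_singleton, hprod', hw]
      · -- condition 3
        intro i h1 h2 hne
        have h1' : i < L'.length + 1 := by simpa using h1
        by_cases hi : i < L'.length
        · have e1 : (ws' ++ [s]).get ⟨i, h2⟩ = ws'.get ⟨i, by omega⟩ := by
            simp [List.get_eq_getElem, List.getElem_append_left (by omega : i < ws'.length)]
          have e2 : (L' ++ [z]).get ⟨i, h1⟩ = L'.get ⟨i, hi⟩ := by
            simp [List.get_eq_getElem, List.getElem_append_left hi]
          rw [e1, e2]
          rw [e1] at hne
          exact hcond3' i hi (by omega) hne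
        · have hieq : i = L'.length := by omega
          subst hieq
          have e1 : (ws' ++ [s]).get ⟨L'.length, h2⟩ = s := by
            simp [List.get_eq_getElem, ← hlen', List.getElem_concat_length]
          have e2 : (L' ++ [z]).get ⟨L'.length, h1⟩ = z := by
            simp [List.get_eq_getElem, List.getElem_concat_length]
          rw [e1, e2]
          rw [e1] at hne
          obtain ⟨y, hy⟩ := IA_nonempty hne
          have hyz := hIAs hy
          rw [Set.mem_singleton_iff] at hyz
          subst hyz
          apply Set.eq_singleton_iff_unique_mem.mpr
          exact ⟨hy, fun y' hy' => hIAs hy'⟩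
      · -- condition 4
        intro i j h1 h2 hij
        have h1' : i < L'.length + 1 := by simpa using h1
        have h2' : j < ws'.length + 1 := by simpa using h2
        by_cases hj : j < L'.length
        · have e1 : (ws' ++ [s]).get ⟨j, h2⟩ = ws'.get ⟨j, by omega⟩ := by
            simp [List.get_eq_getElem, List.getElem_append_left (by omega : j < ws'.length)]
          have e2 : (L' ++ [z]).get ⟨i, h1⟩ = L'.get ⟨i, by omega⟩ := by
            simp [List.get_eq_getElem, List.getElem_append_left (by omega : i < L'.length)]
          rw [e1, e2]
          exact hcond4' i j (by omega) (by omega) hij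
        · have hjeq : j = L'.length := by omega
          subst hjeq
          have e1 : (ws' ++ [s]).get ⟨L'.length, h2⟩ = s := by
            simp [List.get_eq_getElem, ← hlen', List.getElem_concat_length]
          have e2 : (L' ++ [z]).get ⟨i, h1⟩ = L'.get ⟨i, by omega⟩ := by
            simp [List.get_eq_getElem, List.getElem_append_left (by omega : i < L'.length)]
          rw [e1, e2]
          exact hoccs _ (List.get_mem _ _)
      · -- uniqueness
        rintro ws2 ⟨hlen2, hprod2, hcond32, hcond42⟩
        rcases List.eq_nil_or_concat ws2 with rfl | ⟨t, s₂, hws2⟩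
        · simp at hlen2
        · rw [List.concat_eq_append] at hws2
          subst hws2
          have hlent : t.length = L'.length := by
            simp at hlen2; omega
          have hprodt : t.prod * s₂ = r * s := by
            rw [← hw, ← hprod2, List.prod_append, List.prod_singleton]
          have hIAt : IA t.prod ⊆ {v | v ∈ L'} := by
            intro v hv
            obtain ⟨a, ha, hva⟩ := mem_IA_prod hv
            obtain ⟨⟨k, hk⟩, rfl⟩ := List.mem_iff_get.mp ha
            have hane : t.get ⟨k, hk⟩ ≠ 1 := by
              intro h
              rw [h, IA_one] at hva
              exact hva
            have e1 : (t ++ [s₂]).get ⟨k, by simp; omega⟩ = t.get ⟨k, hk⟩ := by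
              simp [List.get_eq_getElem, List.getElem_append_left hk]
            have e2 : (L' ++ [z]).get ⟨k, by simp; omega⟩ = L'.get ⟨k, by omega⟩ := by
              simp [List.get_eq_getElem, List.getElem_append_left (by omega : k < L'.length)]
            have h3 := hcond32 k (by simp; omega) (by simp; omega) (by rw [e1]; exact hane)
            rw [e1, e2] at h3
            rw [h3] at hva
            rw [Set.mem_singleton_iff] at hva
            subst hva
            exact List.get_mem _ _
          have hocct : ∀ i ∈ L', occ i s₂ = 0 := by
            intro i hi
            obtain ⟨⟨k, hk⟩, rfl⟩ := List.mem_iff_get.mp hi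
            have e1 : (t ++ [s₂]).get ⟨t.length, by simp⟩ = s₂ := by
              simp [List.get_eq_getElem, List.getElem_concat_length]
            have e2 : (L' ++ [z]).get ⟨k, by simp; omega⟩ = L'.get ⟨k, hk⟩ := by
              simp [List.get_eq_getElem, List.getElem_append_left hk]
            have h4 := hcond42 k t.length (by simp; omega) (by simp) (by omega)
            rw [e1, e2] at h4
            exact h4
          obtain ⟨hteq, hseq⟩ := block_unique hprodt hIAt hIAr hocct hoccs
          have hGoodt : Good G L' r t := by
            refine ⟨hlent, hteq, ?_, ?_⟩
            · intro i h1 h2 hne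
              have e1 : (t ++ [s₂]).get ⟨i, by simp; omega⟩ = t.get ⟨i, h2⟩ := by
                simp [List.get_eq_getElem, List.getElem_append_left h2]
              have e2 : (L' ++ [z]).get ⟨i, by simp; omega⟩ = L'.get ⟨i, h1⟩ := by
                simp [List.get_eq_getElem, List.getElem_append_left h1]
              have h3 := hcond32 i (by simp; omega) (by simp; omega) (by rw [e1]; exact hne)
              rw [e1, e2] at h3
              exact h3
            · intro i j h1 h2 hij
              have e1 : (t ++ [s₂]).get ⟨j, by simp; omega⟩ = t.get ⟨j, h2⟩ := by
                simp [List.get_eq_getElem, List.getElem_append_left h2]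
              have e2 : (L' ++ [z]).get ⟨i, by simp; omega⟩ = L'.get ⟨i, h1⟩ := by
                simp [List.get_eq_getElem, List.getElem_append_left h1]
              have h4 := hcond42 i j (by simp; omega) (by simp; omega) hij
              rw [e1, e2] at h4
              exact h4
          have := huniq' t hGoodt
          rw [this, hseq]

end Main

section Final

variable {V : Type*} {G : SimpleGraph V}

lemma mem_zip_iff {α β : Type*} {l1 : List α} {l2 : List β} {p : α × β} :
    p ∈ l1.zip l2 ↔ ∃ (i : ℕ) (h1 : i < l1.length) (h2 : i < l2.length),
      p = (l1.get ⟨i, h1⟩, l2.get ⟨i, h2⟩) := by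
  constructor
  · intro hp
    obtain ⟨⟨i, hi⟩, rfl⟩ := List.mem_iff_get.mp hp
    have hlen := List.length_zip (l₁ := l1) (l₂ := l2)
    have h1 : i < l1.length := by rw [hlen] at hi; omega
    have h2 : i < l2.length := by rw [hlen] at hi; omega
    refine ⟨i, h1, h2, ?_⟩
    simp [List.get_eq_getElem, List.getElem_zip]
  · rintro ⟨i, h1, h2, rfl⟩
    have hi : i < (l1.zip l2).length := by rw [List.length_zip]; omega
    have : (l1.zip l2).get ⟨i, hi⟩ = (l1.get ⟨i, h1⟩, l2.get ⟨i, h2⟩) := by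
      simp [List.get_eq_getElem, List.getElem_zip]
    rw [← this]
    exact List.get_mem _ _

end Final


open Classical in
/-- The neighbourhood decomposition: if `IA(w) = {u}` and `u` occurs exactly once
in `w`, and `u₁ < ⋯ < u_d` are the neighbours of `u` occurring in `w`, then there
are unique (possibly empty) words `w₁, …, w_d` with `w = w₁ ⋯ w_d · u`, each
nonempty `w_i` has `IA(w_i) = {u_i}`, and `u_i` does not occur in `w_j` for `i < j`. -/
theorem stmt_9 {V : Type*} [Fintype V] [LinearOrder V] (G : SimpleGraph V) (u : V)
    (w : CF G) (hw : w ≠ 1) (hIA : IA w = {u}) (hocc : occ u w = 1) :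
    ∃! ws : List (CF G),
      ws.length =
        ((Finset.univ.filter (fun z => G.Adj u z ∧ 0 < occ z w)).sort (· ≤ ·)).length ∧
      w = ws.prod * CFmk G (FreeMonoid.of u) ∧
      (∀ p ∈ (((Finset.univ.filter (fun z => G.Adj u z ∧ 0 < occ z w)).sort (· ≤ ·)).zip ws),
        p.2 ≠ 1 → IA p.2 = {p.1}) ∧
      ∀ (i j : ℕ)
        (hi : i < ((Finset.univ.filter (fun z => G.Adj u z ∧ 0 < occ z w)).sort (· ≤ ·)).length)
        (hj : j < ws.length), i < j →
          occ (((Finset.univ.filter (fun z => G.Adj u z ∧ 0 < occ z w)).sort (· ≤ ·)).get ⟨i, hi⟩)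
            (ws.get ⟨j, hj⟩) = 0 := by
  classical
  set L : List V := ((Finset.univ.filter (fun z => G.Adj u z ∧ 0 < occ z w)).sort (· ≤ ·))
    with hLdef
  have hu : u ∈ IA w := by rw [hIA]; exact rfl
  obtain ⟨w', hww⟩ := hu
  have hoccu' : occ u w' = 0 := by
    have h1 : occ u w = occ u w' + 1 := by
      rw [hww, occ_mul, occ_of, if_pos rfl]
    omega
  have hnd : L.Nodup := Finset.sort_nodup _ _
  have hmem : ∀ x, x ∈ L ↔ (G.Adj u x ∧ 0 < occ x w) := by
    intro x
    rw [hLdef, Finset.mem_sort]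
    simp
  have hIAw' : IA w' ⊆ {v | v ∈ L} := by
    intro x hx
    have hxocc : 0 < occ x w' := mem_IA_occ hx
    have hxu : x ≠ u := by
      rintro rfl
      omega
    have hadj : G.Adj u x := by
      by_contra hna
      have hcomm : ∀ y, 0 < occ y (CFmk G (FreeMonoid.of u)) → Comm G x y := by
        intro y hy
        rw [occ_of] at hy
        have hyu : y = u := by by_contra h; rw [if_neg h] at hy; omega
        subst hyu
        exact ⟨hxu, fun h => hna h.symm⟩
      have : x ∈ IA w := by rw [hww]; exact mem_IA_mul_indep hx hcomm
      rw [hIA] at this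
      exact hxu this
    have hxoccw : 0 < occ x w := by rw [hww, occ_mul]; omega
    exact Set.mem_setOf_eq ▸ (hmem x).mpr ⟨hadj, hxoccw⟩
  obtain ⟨ws, ⟨hlen, hprod, hcond3, hcond4⟩, huniq⟩ := main_aux L hnd w' hIAw'
  refine ⟨ws, ⟨hlen, ?_, ?_, ?_⟩, ?_⟩
  · rw [hww, hprod]
  · intro p hp hpne
    obtain ⟨i, h1, h2, rfl⟩ := mem_zip_iff.mp hp
    exact hcond3 i h1 h2 hpne
  · intro i j hi hj hij
    exact hcond4 i j hi hj hij
  · rintro ws2 ⟨hlen2, hprod2, hzip2, hocc2⟩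
    apply huniq
    refine ⟨hlen2, ?_, ?_, hocc2⟩
    · apply cancel_of (v := u)
      rw [← hprod2, ← hww]
    · intro i h1 h2 hne
      exact hzip2 (L.get ⟨i, h1⟩, ws2.get ⟨i, h2⟩) (mem_zip_iff.mpr ⟨i, h1, h2, rfl⟩) hne
end
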